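/- arXiv:2004.10261 — 8 statements merged into one kernel-verified Lean document; each statement's English description precedes it below -/
import Mathlib

section
/- Let γ = (γ_1 ≥ γ_2 ≥ … ≥ γ_ℓ) be a partition of m ≥ 1 and let x, y be natural numbers. Then the hook product of γ⋆(x,y) factors as π(γ⋆(x,y)) = x! · y! · (h_{11}(γ) + x + y) · ∏_{j=2}^{γ_1} (h_{1j}(γ) + x) · ∏_{i=2}^{ℓ} (h_{i1}(γ) + y) · ∏_{(i,j)∈Y(γ), i≥2, j≥2} h_{ij}(γ). -/
/-- The hook length of the cell in (0-based) row `i` and column `j` of the Young diagram of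
the partition whose parts are given by the list `L`: with 1-based indices `(i+1, j+1)`,
this is `(λ_{i+1} - (j+1)) + (λ'_{j+1} - (i+1)) + 1`, where `λ'_{j+1}` is the number of
parts of size at least `j+1`. -/
def hook (L : List ℕ) (i j : ℕ) : ℕ :=
  (L.getD i 0 - (j + 1)) + (L.countP (fun a => decide (j + 1 ≤ a)) - (i + 1)) + 1

/-- The product `π(λ)` of all hook lengths of the partition `λ` given by the list `L`. -/
def hookProd (L : List ℕ) : ℕ :=
  ∏ i ∈ Finset.range L.length, ∏ j ∈ Finset.range (L.getD i 0), hook L i j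

/-- `γ ⋆ (x, y)`: add `x` to the first part of `γ` and append `y` trailing parts equal to `1`. -/
def starPartition (L : List ℕ) (x y : ℕ) : List ℕ :=
  (L.headD 0 + x) :: (L.tail ++ List.replicate y 1)

private lemma countP_replicate' (p : ℕ → Bool) (n a : ℕ) :
    (List.replicate n a).countP p = if p a then n else 0 := by
  induction n with
  | zero => simp
  | succ n ih => rw [List.replicate_succ, List.countP_cons, ih]; split <;> simp [*]

private lemma prod_sub_eq_factorial (n : ℕ) :
    ∏ j ∈ Finset.range n, (n - j) = n.factorial := by
  induction n with
  | zero => simp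
  | succ n ih =>
    rw [Finset.prod_range_succ']
    simp only [Nat.succ_sub_succ, Nat.sub_zero]
    rw [ih, Nat.factorial_succ, mul_comm]

/-- For a partition `γ` of `m ≥ 1` and natural numbers `x, y`, the hook
product of `γ ⋆ (x, y)` factors as
`π(γ⋆(x,y)) = x! ⬝ y! ⬝ (h_{11}(γ)+x+y) ⬝ ∏_{j=2}^{γ₁} (h_{1j}(γ)+x) ⬝ ∏_{i=2}^{ℓ} (h_{i1}(γ)+y)
⬝ ∏_{i,j ≥ 2} h_{ij}(γ)`. -/
theorem stmt0 (m : ℕ) (hm : 1 ≤ m) (γ : List ℕ)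
    (hsort : γ.Pairwise (· ≥ ·)) (hpos : ∀ c ∈ γ, 0 < c) (hsum : γ.sum = m)
    (x y : ℕ) :
    hookProd (starPartition γ x y) =
      Nat.factorial x * Nat.factorial y * (hook γ 0 0 + x + y) *
        (∏ j ∈ Finset.range (γ.headD 0 - 1), (hook γ 0 (j + 1) + x)) *
        (∏ i ∈ Finset.range (γ.length - 1), (hook γ (i + 1) 0 + y)) *
        (∏ i ∈ Finset.range (γ.length - 1),
          ∏ j ∈ Finset.range (γ.getD (i + 1) 0 - 1), hook γ (i + 1) (j + 1)) := by
  obtain ⟨a, t, rfl⟩ : ∃ a t, γ = a :: t := by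
    cases γ with
    | nil => simp at hsum; omega
    | cons a t => exact ⟨a, t, rfl⟩
  have ha : 1 ≤ a := hpos a List.mem_cons_self
  have hta : ∀ b ∈ t, b ≤ a := fun b hb => (List.pairwise_cons.mp hsort).1 b hb
  have htp : ∀ b ∈ t, 1 ≤ b := fun b hb => hpos b (List.mem_cons_of_mem _ hb)
  set L := starPartition (a :: t) x y with hLset
  have hLdef : L = (a + x) :: (t ++ List.replicate y 1) := rfl
  have hlen : L.length = t.length + 1 + y := by simp [hLdef]; omega
  -- getD facts
  have hgetD0 : L.getD 0 0 = a + x := by rw [hLdef, List.getD_cons_zero]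
  have hgetDmid : ∀ i < t.length, L.getD (i + 1) 0 = t.getD i 0 := by
    intro i hi
    rw [hLdef, List.getD_cons_succ, List.getD_append _ _ _ _ hi]
  have hgetDrep : ∀ i < y, L.getD (t.length + 1 + i) 0 = 1 := by
    intro i hi
    rw [hLdef, show t.length + 1 + i = (t.length + i) + 1 by omega, List.getD_cons_succ,
      List.getD_append_right _ _ _ _ (by omega)]
    rw [List.getD_eq_getElem _ _ (by simpa using by omega)]
    simp
  -- counting facts
  have hts : ∀ k, a < k → t.countP (fun b => decide (k ≤ b)) = 0 := by
    intro k hk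
    rw [List.countP_eq_zero]
    intro b hb
    have := hta b hb
    simp only [decide_eq_true_eq]
    omega
  have htlen : t.countP (fun b => decide (1 ≤ b)) = t.length :=
    List.countP_eq_length.mpr (fun b hb => by simpa using htp b hb)
  have hcntL : ∀ k, 2 ≤ k → L.countP (fun b => decide (k ≤ b)) =
      (if k ≤ a + x then 1 else 0) + t.countP (fun b => decide (k ≤ b)) := by
    intro k hk
    rw [hLdef, List.countP_cons, List.countP_append, countP_replicate']
    simp only [decide_eq_true_eq]
    rw [if_neg (by omega)]
    split <;> omega
  have hcntL0 : L.countP (fun b => decide (1 ≤ b)) = t.length + 1 + y := by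
    rw [hLdef, List.countP_cons, List.countP_append, countP_replicate', htlen]
    simp only [decide_eq_true_eq]
    rw [if_pos (by omega), if_pos (by omega)]
    omega
  have hcntγ : ∀ k, 2 ≤ k → (a :: t).countP (fun b => decide (k ≤ b)) =
      (if k ≤ a then 1 else 0) + t.countP (fun b => decide (k ≤ b)) := by
    intro k hk
    rw [List.countP_cons]
    simp only [decide_eq_true_eq]
    split <;> omega
  have hcntγ0 : (a :: t).countP (fun b => decide (1 ≤ b)) = t.length + 1 := by
    rw [List.countP_cons, htlen]
    simp only [decide_eq_true_eq]
    rw [if_pos (by omega)]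
  -- hook value facts
  have h1 : hook L 0 0 = hook (a :: t) 0 0 + x + y := by
    unfold hook
    rw [hgetD0, hcntL0, hcntγ0, List.getD_cons_zero]
    omega
  have h2 : ∀ j, j + 2 ≤ a → hook L 0 (j + 1) = hook (a :: t) 0 (j + 1) + x := by
    intro j hj
    unfold hook
    rw [hgetD0, hcntL (j + 1 + 1) (by omega), hcntγ (j + 1 + 1) (by omega),
      List.getD_cons_zero, if_pos (by omega), if_pos (by omega)]
    omega
  have h3 : ∀ j < x, hook L 0 (a + j) = x - j := by
    intro j hj
    unfold hook
    rw [hgetD0, hcntL (a + j + 1) (by omega), hts (a + j + 1) (by omega),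
      if_pos (by omega)]
    omega
  have h4 : ∀ i < t.length, hook L (i + 1) 0 = hook (a :: t) (i + 1) 0 + y := by
    intro i hi
    unfold hook
    rw [hgetDmid i hi, hcntL0, hcntγ0, List.getD_cons_succ]
    omega
  have htle : ∀ i < t.length, 1 ≤ t.getD i 0 ∧ t.getD i 0 ≤ a := by
    intro i hi
    rw [List.getD_eq_getElem _ _ hi]
    exact ⟨htp _ (List.getElem_mem hi), hta _ (List.getElem_mem hi)⟩
  have h5 : ∀ i < t.length, ∀ j, j + 2 ≤ t.getD i 0 →
      hook L (i + 1) (j + 1) = hook (a :: t) (i + 1) (j + 1) := by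
    intro i hi j hj
    have := htle i hi
    unfold hook
    rw [hgetDmid i hi, hcntL (j + 1 + 1) (by omega), hcntγ (j + 1 + 1) (by omega),
      List.getD_cons_succ, if_pos (by omega), if_pos (by omega)]
  have h6 : ∀ i < y, hook L (t.length + 1 + i) 0 = y - i := by
    intro i hi
    unfold hook
    rw [hgetDrep i hi, hcntL0]
    omega
  -- assembly
  rw [hookProd, hlen, Finset.prod_range_add, Finset.prod_range_succ']
  have e3 : ∏ i ∈ Finset.range y,
      ∏ j ∈ Finset.range (L.getD (t.length + 1 + i) 0), hook L (t.length + 1 + i) j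
      = Nat.factorial y := by
    rw [← prod_sub_eq_factorial y]
    refine Finset.prod_congr rfl fun i hi => ?_
    rw [hgetDrep i (Finset.mem_range.mp hi), Finset.prod_range_one,
      h6 i (Finset.mem_range.mp hi)]
  have e0 : ∏ j ∈ Finset.range (L.getD 0 0), hook L 0 j =
      ((∏ j ∈ Finset.range (a - 1), (hook (a :: t) 0 (j + 1) + x)) *
        (hook (a :: t) 0 0 + x + y)) * Nat.factorial x := by
    rw [hgetD0, show a + x = (a - 1 + 1) + x by omega, Finset.prod_range_add,
      Finset.prod_range_succ']
    congr 1
    · congr 1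
      · refine Finset.prod_congr rfl fun j hj => ?_
        exact h2 j (by have := Finset.mem_range.mp hj; omega)
    · rw [← prod_sub_eq_factorial x]
      refine Finset.prod_congr rfl fun j hj => ?_
      rw [show a - 1 + 1 + j = a + j by omega]
      exact h3 j (Finset.mem_range.mp hj)
  have e12 : ∏ i ∈ Finset.range t.length,
      ∏ j ∈ Finset.range (L.getD (i + 1) 0), hook L (i + 1) j =
      (∏ i ∈ Finset.range t.length, (hook (a :: t) (i + 1) 0 + y)) *
      (∏ i ∈ Finset.range t.length,
        ∏ j ∈ Finset.range (t.getD i 0 - 1), hook (a :: t) (i + 1) (j + 1)) := by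
    rw [← Finset.prod_mul_distrib]
    refine Finset.prod_congr rfl fun i hi => ?_
    have hi' := Finset.mem_range.mp hi
    have hpos' := htle i hi'
    rw [hgetDmid i hi', show t.getD i 0 = (t.getD i 0 - 1) + 1 by omega,
      Finset.prod_range_succ']
    rw [h4 i hi', show t.getD i 0 - 1 + 1 - 1 = t.getD i 0 - 1 by omega]
    rw [mul_comm]
    congr 1
    refine Finset.prod_congr rfl fun j hj => ?_
    exact h5 i hi' j (by have := Finset.mem_range.mp hj; omega)
  rw [e3, e0, e12]
  simp only [List.headD_cons, List.length_cons, List.getD_cons_succ, Nat.add_sub_cancel]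
  ring
end

section
/- Let p be a prime, let m, w, n be natural numbers with 1 ≤ m < p and n = m + pw, let γ be a partition of m, and let a be a natural number with ⌊(w+1)/2⌋ + 1 ≤ a ≤ w. Set λ = γ⋆(ap, (w−a)p) and μ = γ⋆((a−1)p, (w−a+1)p), both partitions of n. Then π(λ) > π(μ); equivalently, by the hook length formula, the irreducible character degrees of the symmetric group S_n satisfy χ^λ(1) = n!/π(λ) < n!/π(μ) = χ^μ(1). -/
namespace S1

/-- number of parts of size at least `t` -/
def cnt (L : List ℕ) (t : ℕ) : ℕ := L.countP (fun b => decide (t ≤ b))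

lemma hook_eq (L : List ℕ) (i j : ℕ) :
    hook L i j = (L.getD i 0 - (j + 1)) + (cnt L (j+1) - (i + 1)) + 1 := rfl

lemma cnt_cons (a : ℕ) (T : List ℕ) (t : ℕ) :
    cnt (a :: T) t = cnt T t + if t ≤ a then 1 else 0 := by
  simp [cnt, List.countP_cons]

lemma cnt_le_length (L : List ℕ) (t : ℕ) : cnt L t ≤ L.length :=
  List.countP_le_length

lemma cnt_anti (L : List ℕ) {t t' : ℕ} (h : t ≤ t') : cnt L t' ≤ cnt L t := by
  apply List.countP_mono_left
  intro b _ hb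
  simp only [decide_eq_true_eq] at hb ⊢
  omega

lemma cnt_one (L : List ℕ) (hpos : ∀ c ∈ L, 0 < c) : cnt L 1 = L.length := by
  apply List.countP_eq_length.mpr
  intro b hb
  simp only [decide_eq_true_eq]; exact hpos b hb

lemma cnt_lower {L : List ℕ} (hs : L.Pairwise (· ≥ ·)) {i t : ℕ} (hi : i < L.length)
    (ht : t ≤ L.getD i 0) : i + 1 ≤ cnt L t := by
  induction L generalizing i with
  | nil => simp at hi
  | cons a T ih =>
    rcases List.pairwise_cons.mp hs with ⟨ha, hT⟩
    rcases i with _ | i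
    · simp only [List.getD_cons_zero] at ht
      rw [cnt_cons, if_pos ht]
      omega
    · simp only [List.getD_cons_succ] at ht
      simp only [List.length_cons, Nat.add_lt_add_iff_right] at hi
      have h1 := ih hT hi ht
      have hmem : T.getD i 0 ∈ T := by
        rw [List.getD_eq_getElem _ _ hi]; exact List.getElem_mem _
      have : t ≤ a := le_trans ht (ha _ hmem)
      rw [cnt_cons, if_pos this]
      omega

lemma cnt_upper {L : List ℕ} (hs : L.Pairwise (· ≥ ·)) {i t : ℕ} (hi : i < L.length)
    (ht : L.getD i 0 < t) : cnt L t ≤ i := by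
  induction L generalizing i with
  | nil => simp at hi
  | cons a T ih =>
    rcases List.pairwise_cons.mp hs with ⟨ha, hT⟩
    rcases i with _ | i
    · simp only [List.getD_cons_zero] at ht
      have : cnt (a :: T) t = 0 := by
        apply List.countP_eq_zero.mpr
        intro b hb
        simp only [decide_eq_true_eq]
        rcases List.mem_cons.mp hb with rfl | hbT
        · omega
        · have := ha b hbT; omega
      omega
    · simp only [List.getD_cons_succ] at ht
      simp only [List.length_cons, Nat.add_lt_add_iff_right] at hi
      have h1 := ih hT hi ht
      rw [cnt_cons]
      split <;> omega

end S1
namespace S1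

/-- first-column hook length of row `i` (0-based) -/
def hv (L : List ℕ) (i : ℕ) : ℕ := L.getD i 0 + (L.length - (i + 1))

/-- product of pairwise differences of first-column hooks -/
def vdm (L : List ℕ) : ℕ :=
  ∏ j ∈ Finset.range L.length, ∏ i ∈ Finset.range j, (hv L i - hv L j)

lemma hv_cons_succ (a : ℕ) (T : List ℕ) (i : ℕ) : hv (a :: T) (i + 1) = hv T i := by
  simp [hv, List.getD_cons_succ]

lemma hv_cons_zero (a : ℕ) (T : List ℕ) : hv (a :: T) 0 = a + T.length := by
  simp [hv]

lemma getD_le_head {L : List ℕ} (hs : L.Pairwise (· ≥ ·)) {a : ℕ} {T : List ℕ}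
    (hL : L = a :: T) (i : ℕ) : L.getD i 0 ≤ a := by
  subst hL
  rcases List.pairwise_cons.mp hs with ⟨ha, _⟩
  rcases i with _ | i
  · simp
  · simp only [List.getD_cons_succ]
    by_cases hi : i < T.length
    · have hmem : T.getD i 0 ∈ T := by
        rw [List.getD_eq_getElem _ _ hi]; exact List.getElem_mem _
      exact ha _ hmem
    · rw [List.getD_eq_default _ _ (by omega)]; omega

lemma hook_cons_succ {a : ℕ} {T : List ℕ} (hs : (a :: T).Pairwise (· ≥ ·))
    {i j : ℕ} (hj : j < T.getD i 0) : hook (a :: T) (i + 1) j = hook T i j := by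
  have hTa : T.getD i 0 ≤ a := by
    have := getD_le_head hs rfl (i + 1)
    simpa [List.getD_cons_succ] using this
  rw [hook_eq, hook_eq, List.getD_cons_succ, cnt_cons, if_pos (by omega)]
  omega

lemma hookProd_cons {a : ℕ} {T : List ℕ} (hs : (a :: T).Pairwise (· ≥ ·)) :
    hookProd (a :: T) = (∏ j ∈ Finset.range a, hook (a :: T) 0 j) * hookProd T := by
  unfold hookProd
  rw [List.length_cons, Finset.prod_range_succ']
  conv_lhs => rw [mul_comm]
  congr 1
  · apply Finset.prod_congr rfl
    intro i _
    apply Finset.prod_congr rfl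
    intro j hj
    exact hook_cons_succ hs (Finset.mem_range.mp hj)

end S1
namespace S1

lemma hook_first_row {a : ℕ} (T : List ℕ) {j : ℕ} (hj : j < a) :
    hook (a :: T) 0 j = (a - j) + cnt T (j + 1) := by
  rw [hook_eq, List.getD_cons_zero, cnt_cons, if_pos (by omega : j + 1 ≤ a)]
  omega

lemma getD_anti {T : List ℕ} (hs : T.Pairwise (· ≥ ·)) {i1 i2 : ℕ} (h : i1 ≤ i2) :
    T.getD i2 0 ≤ T.getD i1 0 := by
  by_cases h2 : i2 < T.length
  · have h1 : i1 < T.length := by omega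
    rw [List.getD_eq_getElem _ _ h1, List.getD_eq_getElem _ _ h2]
    rcases Nat.eq_or_lt_of_le h with rfl | hlt
    · exact le_refl _
    · exact hs.rel_get_of_lt (a := ⟨i1, h1⟩) (b := ⟨i2, h2⟩) hlt
  · rw [List.getD_eq_default _ _ (by omega)]
    exact Nat.zero_le _

lemma firstRow_mul {a : ℕ} {T : List ℕ} (hs : (a :: T).Pairwise (· ≥ ·)) :
    (∏ j ∈ Finset.range a, hook (a :: T) 0 j) *
      (∏ i ∈ Finset.range T.length, ((a + T.length) - hv T i)) = (a + T.length).factorial := by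
  classical
  have hsT : T.Pairwise (· ≥ ·) := (List.pairwise_cons.mp hs).2
  have hTa : ∀ i, T.getD i 0 ≤ a := fun i => by
    have := getD_le_head hs rfl (i + 1); simpa [List.getD_cons_succ] using this
  set f : ℕ → ℕ := fun j => (a - j) + cnt T (j + 1) with hf
  set g : ℕ → ℕ := fun i => (a - T.getD i 0) + i + 1 with hg
  set H := a + T.length with hH
  -- rewrite the two products
  have hrw1 : ∏ j ∈ Finset.range a, hook (a :: T) 0 j = ∏ j ∈ Finset.range a, f j :=
    Finset.prod_congr rfl fun j hj => hook_first_row T (Finset.mem_range.mp hj)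
  have hrw2 : ∏ i ∈ Finset.range T.length, (H - hv T i) = ∏ i ∈ Finset.range T.length, g i := by
    refine Finset.prod_congr rfl fun i hi => ?_
    have hi' := Finset.mem_range.mp hi
    have := hTa i
    simp only [hv, hg, hH]
    omega
  rw [hrw1, hrw2]
  -- injectivity of f on range a
  have hfanti : ∀ j1 j2, j1 < j2 → j2 < a → f j2 < f j1 := by
    intro j1 j2 h12 h2a
    have hc := cnt_anti T (show j1 + 1 ≤ j2 + 1 by omega)
    simp only [hf]; omega
  have hfinj : ∀ j1 ∈ Finset.range a, ∀ j2 ∈ Finset.range a, f j1 = f j2 → j1 = j2 := by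
    intro j1 h1 j2 h2 hEq
    rcases Nat.lt_trichotomy j1 j2 with h | h | h
    · have := hfanti j1 j2 h (Finset.mem_range.mp h2); omega
    · exact h
    · have := hfanti j2 j1 h (Finset.mem_range.mp h1); omega
  -- injectivity of g
  have hgmono : ∀ i1 i2, i1 < i2 → g i1 < g i2 := by
    intro i1 i2 h12
    have := getD_anti hsT (show i1 ≤ i2 by omega)
    have := hTa i1
    simp only [hg]; omega
  have hginj : ∀ i1 ∈ Finset.range T.length, ∀ i2 ∈ Finset.range T.length, g i1 = g i2 → i1 = i2 := by
    intro i1 _ i2 _ hEq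
    rcases Nat.lt_trichotomy i1 i2 with h | h | h
    · have := hgmono i1 i2 h; omega
    · exact h
    · have := hgmono i2 i1 h; omega
  -- disjointness
  have hne : ∀ j < a, ∀ i < T.length, f j ≠ g i := by
    intro j hj i hi
    by_cases hcase : j + 1 ≤ T.getD i 0
    · have h1 := cnt_lower hsT hi hcase
      have := hTa i
      simp only [hf, hg]; omega
    · have h1 := cnt_upper hsT hi (show T.getD i 0 < j + 1 by omega)
      have := hTa i
      simp only [hf, hg]; omega
  set S1 := (Finset.range a).image f with hS1
  set S2 := (Finset.range T.length).image g with hS2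
  have hdisj : Disjoint S1 S2 := by
    rw [Finset.disjoint_left]
    rintro v hv1 hv2
    obtain ⟨j, hj, rfl⟩ := Finset.mem_image.mp hv1
    obtain ⟨i, hi, hgi⟩ := Finset.mem_image.mp hv2
    exact hne j (Finset.mem_range.mp hj) i (Finset.mem_range.mp hi) hgi.symm
  have hsub : S1 ∪ S2 ⊆ Finset.Icc 1 H := by
    intro v hv'
    rcases Finset.mem_union.mp hv' with hv1 | hv2
    · obtain ⟨j, hj, rfl⟩ := Finset.mem_image.mp hv1
      have hj' := Finset.mem_range.mp hj
      have := cnt_le_length T (j + 1)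
      simp only [hf, Finset.mem_Icc, hH]
      omega
    · obtain ⟨i, hi, rfl⟩ := Finset.mem_image.mp hv2
      have hi' := Finset.mem_range.mp hi
      simp only [hg, Finset.mem_Icc, hH]
      omega
  have hcard : (S1 ∪ S2).card = H := by
    rw [Finset.card_union_of_disjoint hdisj, hS1, hS2,
      Finset.card_image_of_injOn fun x hx y hy => hfinj x hx y hy,
      Finset.card_image_of_injOn fun x hx y hy => hginj x hx y hy,
      Finset.card_range, Finset.card_range]
  have hEq : S1 ∪ S2 = Finset.Icc 1 H := by
    apply Finset.eq_of_subset_of_card_le hsub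
    rw [Nat.card_Icc, hcard]
    omega
  have : (∏ v ∈ S1, v) * (∏ v ∈ S2, v) = H.factorial := by
    rw [← Finset.prod_union hdisj, hEq]
    rw [← Finset.Ico_add_one_right_eq_Icc, Finset.prod_Ico_id_eq_factorial]
  rw [← this, hS1, hS2, Finset.prod_image hfinj, Finset.prod_image hginj]

end S1
namespace S1

lemma vdm_cons (a : ℕ) (T : List ℕ) :
    vdm (a :: T) = (∏ i ∈ Finset.range T.length, ((a + T.length) - hv T i)) * vdm T := by
  unfold vdm
  rw [List.length_cons, Finset.prod_range_succ']
  simp only [Finset.range_zero, Finset.prod_empty, mul_one]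
  have : ∀ j ∈ Finset.range T.length,
      ∏ i ∈ Finset.range (j + 1), (hv (a :: T) i - hv (a :: T) (j + 1))
      = ((a + T.length) - hv T j) * ∏ i ∈ Finset.range j, (hv T i - hv T j) := by
    intro j _
    rw [Finset.prod_range_succ']
    simp only [hv_cons_succ, hv_cons_zero]
    rw [mul_comm]
  rw [Finset.prod_congr rfl this, Finset.prod_mul_distrib]

lemma claimA {L : List ℕ} (hs : L.Pairwise (· ≥ ·)) :
    hookProd L * vdm L = ∏ i ∈ Finset.range L.length, (hv L i).factorial := by
  induction L with
  | nil => simp [hookProd, vdm]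
  | cons a T ih =>
    have hsT := (List.pairwise_cons.mp hs).2
    rw [hookProd_cons hs, vdm_cons, List.length_cons, Finset.prod_range_succ']
    simp only [hv_cons_succ, hv_cons_zero]
    rw [← ih hsT, ← firstRow_mul hs]
    ring

lemma hv_pos {L : List ℕ} (hpos : ∀ c ∈ L, 0 < c) {i : ℕ} (hi : i < L.length) :
    0 < hv L i := by
  have : 0 < L.getD i 0 := by
    rw [List.getD_eq_getElem _ _ hi]
    exact hpos _ (List.getElem_mem _)
  unfold hv; omega

lemma hv_strict_anti {L : List ℕ} (hs : L.Pairwise (· ≥ ·)) {i j : ℕ} (hij : i < j)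
    (hj : j < L.length) : hv L j < hv L i := by
  have := getD_anti hs (le_of_lt hij)
  unfold hv; omega

lemma vdm_pos {L : List ℕ} (hs : L.Pairwise (· ≥ ·)) : 0 < vdm L := by
  apply Finset.prod_pos
  intro j hj
  apply Finset.prod_pos
  intro i hi
  have := hv_strict_anti hs (Finset.mem_range.mp hi) (Finset.mem_range.mp hj)
  omega

lemma sum_getD (L : List ℕ) : ∑ i ∈ Finset.range L.length, L.getD i 0 = L.sum := by
  induction L with
  | nil => simp
  | cons a T ih =>
    rw [List.length_cons, Finset.sum_range_succ']
    simp only [List.getD_cons_succ, List.getD_cons_zero, List.sum_cons]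
    rw [ih]
    omega

lemma sum_hv (L : List ℕ) :
    ∑ i ∈ Finset.range L.length, hv L i
      = L.sum + ∑ i ∈ Finset.range L.length, (L.length - (i + 1)) := by
  unfold hv
  rw [Finset.sum_add_distrib, sum_getD]

end S1

namespace S1

open Finset

lemma filter_range_lt (n j : ℕ) (hj : j ≤ n) :
    (Finset.range n).filter (fun i => i < j) = Finset.range j := by
  ext i
  simp only [Finset.mem_filter, Finset.mem_range]
  omega

lemma Ioi_eq_filter {n : ℕ} (i : Fin n) :
    Finset.Ioi i = Finset.univ.filter (fun j => i < j) := by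
  ext j
  simp

lemma prod_pairs {M : Type*} [CommMonoid M] (n : ℕ) (F : ℕ → ℕ → M) :
    ∏ i : Fin n, ∏ j ∈ Finset.Ioi i, F (i : ℕ) (j : ℕ)
      = ∏ j ∈ Finset.range n, ∏ i ∈ Finset.range j, F i j := by
  have step1 : ∀ i : Fin n, ∏ j ∈ Finset.Ioi i, F (i : ℕ) (j : ℕ)
      = ∏ j : Fin n, if (i : ℕ) < (j : ℕ) then F (i : ℕ) (j : ℕ) else 1 := by
    intro i
    rw [Ioi_eq_filter, Finset.prod_filter]
    apply Finset.prod_congr rfl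
    intro j _
    congr 1
  calc ∏ i : Fin n, ∏ j ∈ Finset.Ioi i, F (i : ℕ) (j : ℕ)
      = ∏ i : Fin n, ∏ j : Fin n, if (i : ℕ) < (j : ℕ) then F (i : ℕ) (j : ℕ) else 1 :=
        Finset.prod_congr rfl fun i _ => step1 i
    _ = ∏ j : Fin n, ∏ i : Fin n, if (i : ℕ) < (j : ℕ) then F (i : ℕ) (j : ℕ) else 1 :=
        Finset.prod_comm
    _ = ∏ j ∈ Finset.range n, ∏ i ∈ Finset.range n, if i < j then F i j else 1 := by
        rw [← Fin.prod_univ_eq_prod_range (fun j => ∏ i ∈ Finset.range n, if i < j then F i j else 1) n]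
        apply Finset.prod_congr rfl
        intro j _
        rw [← Fin.prod_univ_eq_prod_range (fun i => if i < (j : ℕ) then F i (j : ℕ) else 1) n]
    _ = ∏ j ∈ Finset.range n, ∏ i ∈ Finset.range j, F i j := by
        apply Finset.prod_congr rfl
        intro j hj
        rw [← filter_range_lt n j (le_of_lt (Finset.mem_range.mp hj)), Finset.prod_filter]

end S1
namespace S1

open Finset Matrix Polynomial

theorem hookProd_dvd {L : List ℕ} (hs : L.Pairwise (· ≥ ·)) :
    hookProd L ∣ (L.sum).factorial := by
  classical
  set R := L.length with hR
  set n := L.sum with hn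
  set h : Fin R → ℕ := fun i => hv L (i : ℕ) with hh
  -- sum of first-column hooks
  have hsum : ∑ i : Fin R, h i = n + ∑ i : Fin R, (i : ℕ) := by
    rw [Fin.sum_univ_eq_sum_range (fun i => hv L i) R, sum_hv]
    congr 1
    rw [Fin.sum_univ_eq_sum_range (fun i => i) R]
    have := Finset.sum_range_reflect (fun i => i) R
    calc ∑ i ∈ Finset.range R, (R - (i + 1))
        = ∑ i ∈ Finset.range R, (R - 1 - i) := by
          apply Finset.sum_congr rfl; intro i hi; omega
      _ = ∑ i ∈ Finset.range R, i := Finset.sum_range_reflect (fun i => i) R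
  -- the two matrices
  set M : Matrix (Fin R) (Fin R) ℚ :=
    Matrix.of (fun i j : Fin R =>
      if (j : ℕ) ≤ h i then (((h i - (j : ℕ)).factorial : ℚ))⁻¹ else 0) with hM
  set N : Matrix (Fin R) (Fin R) ℚ :=
    Matrix.of (fun i j : Fin R => ((h i).descFactorial (j : ℕ) : ℚ)) with hN
  have hNM : N = Matrix.of (fun i j : Fin R => ((h i).factorial : ℚ) * M i j) := by
    ext i j
    simp only [hN, hM, Matrix.of_apply]
    by_cases hj : (j : ℕ) ≤ h i
    · rw [if_pos hj]
      have hfd := Nat.factorial_mul_descFactorial hj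
      have hne : (((h i - (j:ℕ)).factorial : ℚ)) ≠ 0 := by
        exact_mod_cast Nat.factorial_ne_zero _
      rw [eq_comm, mul_inv_eq_iff_eq_mul₀ hne]
      exact_mod_cast (by rw [Nat.mul_comm]; exact hfd.symm :
        (h i).factorial = (h i).descFactorial (j:ℕ) * (h i - (j:ℕ)).factorial)
    · rw [if_neg hj, Nat.descFactorial_eq_zero_iff_lt.mpr (by omega), mul_zero, Nat.cast_zero]
  have detNM : N.det = (∏ i : Fin R, ((h i).factorial : ℚ)) * M.det := by
    rw [hNM]
    exact Matrix.det_mul_column _ _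
  -- N's determinant is the Vandermonde determinant
  have detNV : N.det = (Matrix.vandermonde (fun i : Fin R => (h i : ℚ))).det := by
    rw [Matrix.det_eval_matrixOfPolynomials_eq_det_vandermonde
        (fun i : Fin R => (h i : ℚ)) (fun j : Fin R => descPochhammer ℚ (j : ℕ))
        (fun j => descPochhammer_natDegree ℚ (j : ℕ))
        (fun j => monic_descPochhammer ℚ (j : ℕ))]
    congr 1
    ext i j
    simp only [Matrix.of_apply, hN]
    rw [descPochhammer_eval_eq_descFactorial]
  -- evaluate the Vandermonde determinant as a sign times `vdm L`
  set s : ℚ := ∏ i : Fin R, (-1 : ℚ) ^ (Finset.Ioi i).card with hsdef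
  have habs_s : |s| = 1 := by
    rw [hsdef, Finset.abs_prod]
    apply Finset.prod_eq_one
    intro i _
    rw [abs_pow, abs_neg, abs_one, one_pow]
  have detV : N.det = s * (vdm L : ℚ) := by
    rw [detNV, Matrix.det_vandermonde]
    have hfac : ∀ i : Fin R, ∀ j ∈ Finset.Ioi i,
        ((h j : ℚ) - (h i : ℚ)) = -(((hv L (i:ℕ) - hv L (j:ℕ) : ℕ) : ℚ)) := by
      intro i j hj
      have hij0 : i < j := Finset.mem_Ioi.mp hj
      have hij : (i : ℕ) < (j : ℕ) := hij0
      have hjR : (j : ℕ) < R := j.isLt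
      have hlt := hv_strict_anti hs hij hjR
      rw [Nat.cast_sub (le_of_lt hlt)]
      simp only [hh]
      ring
    calc ∏ i : Fin R, ∏ j ∈ Finset.Ioi i, ((h j : ℚ) - h i)
        = ∏ i : Fin R, ∏ j ∈ Finset.Ioi i, (-(((hv L (i:ℕ) - hv L (j:ℕ) : ℕ) : ℚ))) :=
          Finset.prod_congr rfl fun i _ => Finset.prod_congr rfl (hfac i)
      _ = ∏ i : Fin R, ((-1 : ℚ) ^ (Finset.Ioi i).card *
            ∏ j ∈ Finset.Ioi i, (((hv L (i:ℕ) - hv L (j:ℕ) : ℕ) : ℚ))) := by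
          apply Finset.prod_congr rfl
          intro i _
          rw [← Finset.prod_const, ← Finset.prod_mul_distrib]
          apply Finset.prod_congr rfl
          intro j _
          ring
      _ = s * ∏ i : Fin R, ∏ j ∈ Finset.Ioi i, (((hv L (i:ℕ) - hv L (j:ℕ) : ℕ) : ℚ)) := by
          rw [Finset.prod_mul_distrib]
      _ = s * (vdm L : ℚ) := by
          congr 1
          rw [prod_pairs R (fun i j => ((hv L i - hv L j : ℕ) : ℚ))]
          rw [vdm, Nat.cast_prod]
          exact Finset.prod_congr rfl fun j _ => by rw [Nat.cast_prod]
  -- integrality of n! * det M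
  set z : ℤ := ∑ σ : Equiv.Perm (Fin R), ((Equiv.Perm.sign σ : ℤ)) *
    (if ∀ i : Fin R, (i : ℕ) ≤ h (σ i) then
      (Nat.multinomial Finset.univ (fun i : Fin R => h (σ i) - (i : ℕ)) : ℤ) else 0) with hz
  have hint : ((n.factorial : ℚ)) * M.det = (z : ℚ) := by
    rw [Matrix.det_apply', Finset.mul_sum, hz, Int.cast_sum]
    apply Finset.sum_congr rfl
    intro σ _
    rw [Int.cast_mul, apply_ite (fun t : ℤ => (t : ℚ)), Int.cast_zero, Int.cast_natCast]
    by_cases hσ : ∀ i : Fin R, (i : ℕ) ≤ h (σ i)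
    · rw [if_pos hσ]
      have hprod : ∏ i : Fin R, M (σ i) i
          = (∏ i : Fin R, (((h (σ i) - (i : ℕ)).factorial : ℚ)))⁻¹ := by
        rw [← Finset.prod_inv_distrib]
        apply Finset.prod_congr rfl
        intro i _
        simp only [hM, Matrix.of_apply, if_pos (hσ i)]
      have hsum2 : ∑ i : Fin R, (h (σ i) - (i : ℕ)) = n := by
        rw [Finset.sum_tsub_distrib Finset.univ (fun i _ => hσ i)]
        rw [Equiv.sum_comp σ h, hsum]
        omega
      have hspec := Nat.multinomial_spec Finset.univ (fun i : Fin R => h (σ i) - (i : ℕ))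
      rw [hsum2] at hspec
      have hQ : (Nat.multinomial Finset.univ (fun i : Fin R => h (σ i) - (i : ℕ)) : ℚ)
          = (n.factorial : ℚ) * (∏ i : Fin R, (((h (σ i) - (i : ℕ)).factorial : ℚ)))⁻¹ := by
        have hne : (∏ i : Fin R, (((h (σ i) - (i : ℕ)).factorial : ℚ))) ≠ 0 := by
          apply Finset.prod_ne_zero_iff.mpr
          intro i _
          exact_mod_cast Nat.factorial_ne_zero _
        rw [eq_comm, mul_inv_eq_iff_eq_mul₀ hne]
        have hspec' := hspec
        rw [Nat.mul_comm] at hspec'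
        exact_mod_cast hspec'.symm
      rw [hprod, hQ]
      ring
    · rw [if_neg hσ]
      push_neg at hσ
      obtain ⟨i, hi⟩ := hσ
      have : M (σ i) i = 0 := by
        simp only [hM, Matrix.of_apply, if_neg (by omega : ¬ (i : ℕ) ≤ h (σ i))]
      have hzero : ∏ i : Fin R, M (σ i) i = 0 :=
        Finset.prod_eq_zero (Finset.mem_univ i) this
      rw [hzero]
      ring
  -- assemble everything
  have hca : ((hookProd L : ℚ)) * (vdm L : ℚ) = ∏ i : Fin R, ((h i).factorial : ℚ) := by
    have h1 := claimA hs
    have h2 : ((hookProd L * vdm L : ℕ) : ℚ) = ((∏ i ∈ Finset.range R, (hv L i).factorial : ℕ) : ℚ) := by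
      rw [h1]
    push_cast at h2
    rw [h2]
    exact (Fin.prod_univ_eq_prod_range (fun i => ((hv L i).factorial : ℚ)) R).symm
  have key : ((hookProd L : ℚ)) * (z : ℚ) = (n.factorial : ℚ) * s := by
    have hvdm : ((vdm L : ℚ)) ≠ 0 := by
      have := vdm_pos hs
      positivity
    apply mul_right_cancel₀ hvdm
    calc ((hookProd L : ℚ)) * (z : ℚ) * (vdm L : ℚ)
        = ((hookProd L : ℚ) * (vdm L : ℚ)) * (z : ℚ) := by ring
      _ = (∏ i : Fin R, ((h i).factorial : ℚ)) * ((n.factorial : ℚ) * M.det) := by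
          rw [hca, hint]
      _ = (n.factorial : ℚ) * N.det := by rw [detNM]; ring
      _ = (n.factorial : ℚ) * s * (vdm L : ℚ) := by rw [detV]; ring
  have keyabs : ((hookProd L : ℚ)) * ((z.natAbs : ℕ) : ℚ) = (n.factorial : ℚ) := by
    have := congrArg abs key
    rw [abs_mul, abs_mul, habs_s, mul_one,
      abs_of_nonneg (by positivity : (0:ℚ) ≤ (hookProd L : ℚ)),
      abs_of_nonneg (by positivity : (0:ℚ) ≤ ((n.factorial : ℚ)))] at this
    rw [← this]
    congr 1
    rw [Nat.cast_natAbs, Int.cast_abs]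
  have : hookProd L * z.natAbs = n.factorial := by exact_mod_cast keyabs
  exact ⟨z.natAbs, this.symm⟩

end S1
namespace S1

/-- product of the hooks of row `i` (0-based), except the first-column cell -/
def inner (γ : List ℕ) (i : ℕ) : ℕ :=
  ∏ j ∈ Finset.range (γ.getD i 0 - 1), hook γ i (j + 1)

lemma prod_sub_eq_factorial (n : ℕ) :
    ∏ t ∈ Finset.range n, (n - t) = n.factorial := by
  rw [← Finset.prod_range_add_one_eq_factorial, ← Finset.prod_range_reflect]
  apply Finset.prod_congr rfl
  intro t ht
  have := Finset.mem_range.mp ht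
  omega

lemma cnt_eq_zero {T : List ℕ} {t : ℕ} (h : ∀ b ∈ T, b < t) : cnt T t = 0 := by
  apply List.countP_eq_zero.mpr
  intro b hb
  simp only [decide_eq_true_eq]
  have := h b hb
  omega

lemma cnt_replicate_ge_two {y t : ℕ} (ht : 2 ≤ t) : cnt (List.replicate y 1) t = 0 := by
  apply cnt_eq_zero
  intro b hb
  have := List.eq_of_mem_replicate hb
  omega

lemma cnt_append (l l' : List ℕ) (t : ℕ) : cnt (l ++ l') t = cnt l t + cnt l' t := by
  unfold cnt
  rw [List.countP_append]

lemma hookProd_star_cons {g1 : ℕ} {T : List ℕ} (hs : (g1 :: T).Pairwise (· ≥ ·))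
    (hpos : ∀ c ∈ g1 :: T, 0 < c) (x y : ℕ) :
    hookProd (starPartition (g1 :: T) x y)
      = ((g1 + x + y + T.length) *
          ((∏ t ∈ Finset.range (g1 - 1), ((g1 - (t + 1)) + x + cnt T (t + 2))) * x.factorial))
        * ((∏ t ∈ Finset.range T.length, ((hv T t + y) * inner (g1 :: T) (t + 1)))
            * y.factorial) := by
  have hg1 : 0 < g1 := hpos g1 (List.mem_cons_self)
  have hTle : ∀ b ∈ T, b ≤ g1 := fun b hb => (List.pairwise_cons.mp hs).1 b hb
  have hTpos : ∀ b ∈ T, 0 < b := fun b hb => hpos b (List.mem_cons_of_mem _ hb)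
  set ℓT := T.length with hℓT
  set s : List ℕ := starPartition (g1 :: T) x y with hsdef
  have hs_eq : s = (g1 + x) :: (T ++ List.replicate y 1) := rfl
  have hslen : s.length = (ℓT + y) + 1 := by
    rw [hs_eq]
    simp only [List.length_cons, List.length_append, List.length_replicate]
    rw [hℓT]
  -- counting facts
  have hcnt1 : cnt s 1 = ℓT + y + 1 := by
    rw [cnt_one s (by
      intro c hc
      rw [hs_eq] at hc
      rcases List.mem_cons.mp hc with rfl | hc2
      · omega
      · rcases List.mem_append.mp hc2 with hc3 | hc3
        · exact hTpos c hc3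
        · have := List.eq_of_mem_replicate hc3; omega), hslen]
  have hcntTR : ∀ t, 2 ≤ t → cnt (T ++ List.replicate y 1) t = cnt T t := by
    intro t ht
    rw [cnt_append, cnt_replicate_ge_two ht]
    omega
  have hcnts : ∀ t, 2 ≤ t → t ≤ g1 + x → cnt s t = 1 + cnt T t := by
    intro t ht htg
    rw [hs_eq, cnt_cons, if_pos htg, hcntTR t ht]
    omega
  have hgetDrow : ∀ t, t < ℓT → s.getD (t + 1) 0 = T.getD t 0 := by
    intro t ht
    rw [hs_eq, List.getD_cons_succ, List.getD_append _ _ _ _ (by omega)]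
  have hgetDone : ∀ k, k < y → s.getD (ℓT + k + 1) 0 = 1 := by
    intro k hk
    rw [hs_eq, List.getD_cons_succ, List.getD_append_right _ _ _ _ (by omega)]
    have : (List.replicate y 1).getD (ℓT + k - T.length) 0 = 1 := by
      rw [List.getD_eq_getElem _ _ (by simp; omega)]
      simp
    exact this
  -- row ≥ 1, row ≤ ℓT : ordinary rows
  have rowt : ∀ t, t < ℓT →
      (∏ j ∈ Finset.range (s.getD (t + 1) 0), hook s (t + 1) j)
        = (hv T t + y) * inner (g1 :: T) (t + 1) := by
    intro t ht
    have hTt : 0 < T.getD t 0 := by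
      rw [List.getD_eq_getElem _ _ ht]; exact hTpos _ (List.getElem_mem _)
    have hTtg : T.getD t 0 ≤ g1 := by
      rw [List.getD_eq_getElem _ _ ht]; exact hTle _ (List.getElem_mem _)
    rw [hgetDrow t ht]
    have hsplit : T.getD t 0 = (T.getD t 0 - 1) + 1 := by omega
    rw [hsplit, Finset.prod_range_succ']
    have h0 : hook s (t + 1) 0 = hv T t + y := by
      rw [hook_eq, hgetDrow t ht, hcnt1]
      unfold hv
      omega
    have hj : ∀ j ∈ Finset.range (T.getD t 0 - 1),
        hook s (t + 1) (j + 1) = hook (g1 :: T) (t + 1) (j + 1) := by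
      intro j hjm
      have hjlt := Finset.mem_range.mp hjm
      have e2 : j + 1 + 1 = j + 2 := by omega
      rw [hook_eq, hook_eq, hgetDrow t ht, List.getD_cons_succ, e2,
        hcnts (j + 2) (by omega) (by omega), cnt_cons, if_pos (by omega)]
      omega
    rw [Finset.prod_congr rfl hj, h0]
    unfold inner
    rw [List.getD_cons_succ, mul_comm]
  -- rows of the `1`s
  have rowone : ∀ k, k < y →
      (∏ j ∈ Finset.range (s.getD (ℓT + k + 1) 0), hook s (ℓT + k + 1) j) = y - k := by
    intro k hk
    rw [hgetDone k hk, Finset.prod_range_one, hook_eq, hgetDone k hk, hcnt1]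
    omega
  -- the first row
  have row0 : (∏ j ∈ Finset.range (s.getD 0 0), hook s 0 j)
      = (g1 + x + y + ℓT) *
          ((∏ t ∈ Finset.range (g1 - 1), ((g1 - (t + 1)) + x + cnt T (t + 2))) * x.factorial) := by
    have hgd0 : s.getD 0 0 = g1 + x := by rw [hs_eq, List.getD_cons_zero]
    rw [hgd0]
    have hsplit : g1 + x = ((g1 - 1) + x) + 1 := by omega
    conv_lhs => rw [hsplit, Finset.prod_range_succ', Finset.prod_range_add]
    have h00 : hook s 0 0 = g1 + x + y + ℓT := by
      rw [hook_eq, hgd0, hcnt1]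
      omega
    have hA : ∀ t ∈ Finset.range (g1 - 1),
        hook s 0 (t + 1) = (g1 - (t + 1)) + x + cnt T (t + 2) := by
      intro t htm
      have htlt := Finset.mem_range.mp htm
      rw [hook_eq, hgd0, hcnts (t + 2) (by omega) (by omega)]
      omega
    have hX : ∀ t ∈ Finset.range x,
        hook s 0 ((g1 - 1) + t + 1) = x - t := by
      intro t htm
      have htlt := Finset.mem_range.mp htm
      have hcz : cnt s (g1 + t + 1) = 1 := by
        rw [hs_eq, cnt_cons, if_pos (by omega), cnt_append,
          cnt_replicate_ge_two (by omega), cnt_eq_zero (fun b hb => by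
            have := hTle b hb; omega)]
      have hidx : (g1 - 1) + t + 1 + 1 = g1 + t + 1 := by omega
      rw [hook_eq, hgd0, hidx, hcz]
      omega
    rw [Finset.prod_congr rfl hA, Finset.prod_congr rfl hX, h00,
      prod_sub_eq_factorial]
    ring
  -- assemble
  unfold hookProd
  rw [hslen, Finset.prod_range_succ', Finset.prod_range_add,
    Finset.prod_congr rfl (fun t htm => rowt t (Finset.mem_range.mp htm)),
    Finset.prod_congr rfl (fun k hkm => rowone k (Finset.mem_range.mp hkm)),
    prod_sub_eq_factorial, row0]
  ring

end S1
namespace S1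

lemma hook_pos (L : List ℕ) (i j : ℕ) : 0 < hook L i j := by
  unfold hook; omega

lemma length_le_sum {T : List ℕ} (hpos : ∀ b ∈ T, 0 < b) : T.length ≤ T.sum := by
  induction T with
  | nil => simp
  | cons a T ih =>
    have ha := hpos a (List.mem_cons_self)
    have := ih (fun b hb => hpos b (List.mem_cons_of_mem _ hb))
    simp only [List.length_cons, List.sum_cons]
    omega

lemma hv_le_sum {T : List ℕ} (hpos : ∀ b ∈ T, 0 < b) {t : ℕ} (ht : t < T.length) :
    hv T t ≤ T.sum := by
  induction T generalizing t with
  | nil => simp at ht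
  | cons a T ih =>
    have ha := hpos a (List.mem_cons_self)
    have hTpos : ∀ b ∈ T, 0 < b := fun b hb => hpos b (List.mem_cons_of_mem _ hb)
    rcases t with _ | t
    · have := length_le_sum hTpos
      simp only [hv_cons_zero, List.sum_cons]
      omega
    · simp only [List.length_cons, Nat.add_lt_add_iff_right] at ht
      have := ih hTpos ht
      rw [hv_cons_succ]
      simp only [List.sum_cons]
      omega

lemma factorial_add (n p : ℕ) :
    (n + p).factorial = n.factorial * ∏ k ∈ Finset.range p, (n + 1 + k) := by
  induction p with
  | zero => simp
  | succ p ih =>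
    rw [show n + (p + 1) = (n + p) + 1 by omega, Nat.factorial_succ, ih,
      Finset.prod_range_succ]
    ring

/-- The core combinatorial strict inequality. -/
lemma core_lt {T : List ℕ} (hsT : T.Pairwise (· ≥ ·)) (hTpos : ∀ b ∈ T, 0 < b)
    {p y : ℕ} (hp : 0 < p) (hhv : ∀ t < T.length, 1 ≤ hv T t ∧ hv T t ≤ p)
    (hlen : T.length < p) :
    (∏ k ∈ Finset.range p, (y + 1 + k)) * (∏ t ∈ Finset.range T.length, (hv T t + (y + p)))
      < (∏ k ∈ Finset.range p, (y + p + 1 + k)) * (∏ t ∈ Finset.range T.length, (hv T t + y)) := by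
  classical
  set U : Finset ℕ := Finset.Icc 1 p with hU
  set S : Finset ℕ := (Finset.range T.length).image (fun t => hv T t) with hS
  have hDinj : ∀ t1 ∈ Finset.range T.length, ∀ t2 ∈ Finset.range T.length,
      hv T t1 = hv T t2 → t1 = t2 := by
    intro t1 h1 t2 h2 hEq
    rcases Nat.lt_trichotomy t1 t2 with h | h | h
    · have := hv_strict_anti hsT h (Finset.mem_range.mp h2); omega
    · exact h
    · have := hv_strict_anti hsT h (Finset.mem_range.mp h1); omega
  have hSsub : S ⊆ U := by
    intro k hk
    obtain ⟨t, ht, rfl⟩ := Finset.mem_image.mp hk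
    have := hhv t (Finset.mem_range.mp ht)
    rw [hU, Finset.mem_Icc]
    omega
  have hScard : S.card = T.length := by
    rw [hS, Finset.card_image_of_injOn (fun a ha b hb => hDinj a ha b hb), Finset.card_range]
  have hUcard : U.card = p := by rw [hU, Nat.card_Icc]; omega
  have hne : (U \ S).Nonempty := by
    rw [← Finset.card_pos, Finset.card_sdiff_of_subset hSsub, hUcard, hScard]
    omega
  -- convert the range-products to products over U
  have hPY : ∀ c : ℕ, (∏ k ∈ Finset.range p, (y + c + 1 + k)) = ∏ k ∈ U, (k + (y + c)) := by
    intro c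
    rw [hU, ← Finset.Ico_add_one_right_eq_Icc, Finset.prod_Ico_eq_prod_range]
    apply Finset.prod_congr (by norm_num)
    intro k _
    omega
  have hPY0 : (∏ k ∈ Finset.range p, (y + 1 + k)) = ∏ k ∈ U, (k + y) := by
    have := hPY 0
    simpa using this
  -- convert the hv-products to products over S
  have hBv : ∀ v : ℕ, (∏ t ∈ Finset.range T.length, (hv T t + v)) = ∏ k ∈ S, (k + v) := by
    intro v
    rw [hS, Finset.prod_image (fun a ha b hb h => hDinj a ha b hb h)]
  rw [hPY0, hPY p, hBv (y + p), hBv y]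
  rw [← Finset.prod_sdiff hSsub, ← Finset.prod_sdiff (f := fun k => k + (y + p)) hSsub]
  have hstrict : (∏ k ∈ U \ S, (k + y)) < ∏ k ∈ U \ S, (k + (y + p)) := by
    apply Finset.prod_lt_prod_of_nonempty
    · intro k hk
      have : k ∈ U := Finset.mem_sdiff.mp hk |>.1
      rw [hU, Finset.mem_Icc] at this
      omega
    · intro k _
      omega
    · exact hne
  calc (∏ k ∈ U \ S, (k + y)) * (∏ k ∈ S, (k + y)) * ∏ k ∈ S, (k + (y + p))
      = (∏ k ∈ U \ S, (k + y)) * ((∏ k ∈ S, (k + y)) * ∏ k ∈ S, (k + (y + p))) := by ring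
    _ < (∏ k ∈ U \ S, (k + (y + p))) * ((∏ k ∈ S, (k + y)) * ∏ k ∈ S, (k + (y + p))) := by
        apply Nat.mul_lt_mul_of_lt_of_le hstrict (le_refl _)
        apply Nat.mul_pos <;>
          · apply Finset.prod_pos
            intro k hk
            have := hSsub hk
            rw [hU, Finset.mem_Icc] at this
            omega
    _ = (∏ k ∈ U \ S, (k + (y + p))) * (∏ k ∈ S, (k + (y + p))) * ∏ k ∈ S, (k + y) := by ring

end S1
namespace S1

lemma star_lt {g1 p m : ℕ} {T : List ℕ} (hs : (g1 :: T).Pairwise (· ≥ ·))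
    (hpos : ∀ c ∈ g1 :: T, 0 < c) (hsum : (g1 :: T).sum = m) (hmp : m < p)
    (hp : 0 < p) {x' y : ℕ} (hxy : y + p ≤ x') :
    hookProd (starPartition (g1 :: T) x' (y + p))
      < hookProd (starPartition (g1 :: T) (x' + p) y) := by
  have hsT : T.Pairwise (· ≥ ·) := (List.pairwise_cons.mp hs).2
  have hTpos : ∀ b ∈ T, 0 < b := fun b hb => hpos b (List.mem_cons_of_mem _ hb)
  have hg1 : 0 < g1 := hpos g1 (List.mem_cons_self)
  have hTsum : g1 + T.sum = m := by
    simp only [List.sum_cons] at hsum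
    omega
  have hlen : T.length < p := by
    have := length_le_sum hTpos
    omega
  have hhv : ∀ t < T.length, 1 ≤ hv T t ∧ hv T t ≤ p := by
    intro t ht
    refine ⟨hv_pos hTpos ht, ?_⟩
    have := hv_le_sum hTpos ht
    omega
  rw [hookProd_star_cons hs hpos, hookProd_star_cons hs hpos]
  simp only [Finset.prod_mul_distrib]
  set A1 := ∏ t ∈ Finset.range (g1 - 1), (g1 - (t + 1) + x' + cnt T (t + 2)) with hA1
  set A2 := ∏ t ∈ Finset.range (g1 - 1), (g1 - (t + 1) + (x' + p) + cnt T (t + 2)) with hA2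
  set B1 := ∏ t ∈ Finset.range T.length, (hv T t + (y + p)) with hB1
  set B2 := ∏ t ∈ Finset.range T.length, (hv T t + y) with hB2
  set I := ∏ t ∈ Finset.range T.length, inner (g1 :: T) (t + 1) with hI
  set PX := ∏ k ∈ Finset.range p, (x' + 1 + k) with hPX
  set PY := ∏ k ∈ Finset.range p, (y + 1 + k) with hPY
  set PPY := ∏ k ∈ Finset.range p, (y + p + 1 + k) with hPPY
  have hApos : 0 < A1 := by
    rw [hA1]
    apply Finset.prod_pos
    intro t ht
    have := Finset.mem_range.mp ht
    omega
  have hAle : A1 ≤ A2 := by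
    rw [hA1, hA2]
    apply Finset.prod_le_prod'
    intro t _
    omega
  have hIpos : 0 < I := by
    rw [hI]
    apply Finset.prod_pos
    intro t _
    apply Finset.prod_pos
    intro j _
    exact hook_pos _ _ _
  have hB2pos : 0 < B2 := by
    rw [hB2]
    apply Finset.prod_pos
    intro t ht
    have := (hhv t (Finset.mem_range.mp ht)).1
    omega
  have c3 : PY * B1 < PPY * B2 := core_lt hsT hTpos hp hhv hlen
  have c4 : PPY ≤ PX := by
    rw [hPPY, hPX]
    apply Finset.prod_le_prod'
    intro k _
    omega
  have hK : g1 + x' + (y + p) + T.length = g1 + (x' + p) + y + T.length := by omega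
  rw [hK]
  set K := g1 + (x' + p) + y + T.length with hKdef
  have hKpos : 0 < K := by rw [hKdef]; omega
  have hCpos : 0 < x'.factorial * y.factorial * I * A1 :=
    Nat.mul_pos (Nat.mul_pos (Nat.mul_pos x'.factorial_pos y.factorial_pos) hIpos) hApos
  have inner_lt : A1 * x'.factorial * (B1 * I * (y + p).factorial)
      < A2 * (x' + p).factorial * (B2 * I * y.factorial) := by
    calc A1 * x'.factorial * (B1 * I * (y + p).factorial)
        = (x'.factorial * y.factorial * I * A1) * (PY * B1) := by
          rw [factorial_add y p, ← hPY]; ring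
      _ < (x'.factorial * y.factorial * I * A1) * (PPY * B2) :=
          mul_lt_mul_of_pos_left c3 hCpos
      _ ≤ (x'.factorial * y.factorial * I * A2) * (PX * B2) := by
          apply Nat.mul_le_mul
          · exact Nat.mul_le_mul (le_refl _) hAle
          · exact Nat.mul_le_mul c4 (le_refl _)
      _ = A2 * (x' + p).factorial * (B2 * I * y.factorial) := by
          rw [factorial_add x' p, ← hPX]; ring
  calc K * (A1 * x'.factorial) * (B1 * I * (y + p).factorial)
      = K * (A1 * x'.factorial * (B1 * I * (y + p).factorial)) := by ring
    _ < K * (A2 * (x' + p).factorial * (B2 * I * y.factorial)) :=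
        mul_lt_mul_of_pos_left inner_lt hKpos
    _ = K * (A2 * (x' + p).factorial) * (B2 * I * y.factorial) := by ring

end S1
namespace S1

lemma hookProd_pos (L : List ℕ) : 0 < hookProd L := by
  apply Finset.prod_pos
  intro i _
  apply Finset.prod_pos
  intro j _
  exact hook_pos _ _ _

lemma star_sorted {g1 : ℕ} {T : List ℕ} (hs : (g1 :: T).Pairwise (· ≥ ·))
    (hpos : ∀ c ∈ g1 :: T, 0 < c) (x y : ℕ) :
    (starPartition (g1 :: T) x y).Pairwise (· ≥ ·) := by
  have hsT : T.Pairwise (· ≥ ·) := (List.pairwise_cons.mp hs).2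
  have hTle : ∀ b ∈ T, b ≤ g1 := fun b hb => (List.pairwise_cons.mp hs).1 b hb
  have hTpos : ∀ b ∈ T, 0 < b := fun b hb => hpos b (List.mem_cons_of_mem _ hb)
  have hg1 : 0 < g1 := hpos g1 (List.mem_cons_self)
  show ((g1 + x) :: (T ++ List.replicate y 1)).Pairwise (· ≥ ·)
  rw [List.pairwise_cons]
  constructor
  · intro b hb
    rcases List.mem_append.mp hb with hb1 | hb1
    · have := hTle b hb1; omega
    · have := List.eq_of_mem_replicate hb1; omega
  · rw [List.pairwise_append]
    refine ⟨hsT, ?_, ?_⟩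
    · rw [List.pairwise_replicate]
      right; omega
    · intro b hb c hc
      have := List.eq_of_mem_replicate hc
      have := hTpos b hb
      omega

lemma star_pos {g1 : ℕ} {T : List ℕ} (hpos : ∀ c ∈ g1 :: T, 0 < c) (x y : ℕ) :
    ∀ c ∈ starPartition (g1 :: T) x y, 0 < c := by
  have hg1 : 0 < g1 := hpos g1 (List.mem_cons_self)
  intro c hc
  rcases List.mem_cons.mp hc with rfl | hc1
  · simp only [List.headD_cons]
    omega
  · rcases List.mem_append.mp hc1 with hc2 | hc2
    · exact hpos c (List.mem_cons_of_mem _ hc2)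
    · have := List.eq_of_mem_replicate hc2; omega

lemma star_sum {g1 : ℕ} (T : List ℕ) (x y : ℕ) :
    (starPartition (g1 :: T) x y).sum = (g1 :: T).sum + x + y := by
  show ((g1 + x) :: (T ++ List.replicate y 1)).sum = _
  simp only [List.sum_cons, List.sum_append, List.sum_replicate, smul_eq_mul, Nat.mul_one]
  omega

end S1


/-- Lemma 3.3 of the paper. For a prime `p`, `1 ≤ m < p`, `n = m + pw`,
a partition `γ` of `m`, and `⌊(w+1)/2⌋ + 1 ≤ a ≤ w`, setting `λ = γ⋆(ap, (w-a)p)` and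
`μ = γ⋆((a-1)p, (w-a+1)p)` one has `π(λ) > π(μ)`, equivalently
`χ^λ(1) = n!/π(λ) < n!/π(μ) = χ^μ(1)`. -/
theorem stmt1 (p m w n : ℕ) (hp : p.Prime) (hm : 1 ≤ m) (hmp : m < p)
    (hn : n = m + p * w) (γ : List ℕ)
    (hsort : γ.Pairwise (· ≥ ·)) (hpos : ∀ c ∈ γ, 0 < c) (hsum : γ.sum = m)
    (a : ℕ) (ha1 : (w + 1) / 2 + 1 ≤ a) (ha2 : a ≤ w) :
    hookProd (starPartition γ ((a - 1) * p) ((w - a + 1) * p)) <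
      hookProd (starPartition γ (a * p) ((w - a) * p)) ∧
    n.factorial / hookProd (starPartition γ (a * p) ((w - a) * p)) <
      n.factorial / hookProd (starPartition γ ((a - 1) * p) ((w - a + 1) * p)) := by
  have hppos : 0 < p := hp.pos
  have ha : 2 * a ≥ w + 2 ∧ 1 ≤ a := by omega
  -- γ is nonempty
  obtain ⟨g1, T, rfl⟩ : ∃ g1 T, γ = g1 :: T := by
    cases γ with
    | nil => simp at hsum; omega
    | cons g1 T => exact ⟨g1, T, rfl⟩
  -- arithmetic on the parameters
  have hx : a * p = (a - 1) * p + p := by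
    have h1 : a = (a - 1) + 1 := by omega
    calc a * p = ((a - 1) + 1) * p := by rw [← h1]
      _ = (a - 1) * p + p := by ring
  have hy : (w - a + 1) * p = (w - a) * p + p := by ring
  have hxy : (w - a) * p + p ≤ (a - 1) * p := by
    rw [← hy]
    apply Nat.mul_le_mul_right
    omega
  -- the strict hook product inequality
  have hlt : hookProd (starPartition (g1 :: T) ((a - 1) * p) ((w - a + 1) * p)) <
      hookProd (starPartition (g1 :: T) (a * p) ((w - a) * p)) := by
    rw [hx, hy]
    exact S1.star_lt hsort hpos hsum hmp hppos hxy
  refine ⟨hlt, ?_⟩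
  -- divisibility of n! by the hook product of μ
  have hsumμ : (starPartition (g1 :: T) ((a - 1) * p) ((w - a + 1) * p)).sum = n := by
    rw [S1.star_sum, hsum, hn]
    have : (a - 1) * p + (w - a + 1) * p = p * w := by
      rw [← Nat.add_mul]
      have : (a - 1) + (w - a + 1) = w := by omega
      rw [this, Nat.mul_comm]
    omega
  have hdvd : hookProd (starPartition (g1 :: T) ((a - 1) * p) ((w - a + 1) * p)) ∣ n.factorial := by
    rw [← hsumμ]
    exact S1.hookProd_dvd (S1.star_sorted hsort hpos _ _)
  obtain ⟨c, hc⟩ := hdvd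
  have hμpos := S1.hookProd_pos (starPartition (g1 :: T) ((a - 1) * p) ((w - a + 1) * p))
  have hlampos := S1.hookProd_pos (starPartition (g1 :: T) (a * p) ((w - a) * p))
  have hcpos : 0 < c := by
    rcases Nat.eq_zero_or_pos c with rfl | h
    · rw [Nat.mul_zero] at hc
      have := Nat.factorial_pos n
      omega
    · exact h
  have hqμ : n.factorial / hookProd (starPartition (g1 :: T) ((a - 1) * p) ((w - a + 1) * p)) = c := by
    rw [hc, Nat.mul_div_cancel_left _ hμpos]
  rw [hqμ, Nat.div_lt_iff_lt_mul hlampos, hc]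
  calc hookProd (starPartition (g1 :: T) ((a - 1) * p) ((w - a + 1) * p)) * c
      < hookProd (starPartition (g1 :: T) (a * p) ((w - a) * p)) * c :=
        Nat.mul_lt_mul_of_lt_of_le hlt (le_refl c) hcpos
    _ = c * hookProd (starPartition (g1 :: T) (a * p) ((w - a) * p)) := Nat.mul_comm _ _
end

section
/- Let p be a prime, let m, w be natural numbers with 1 ≤ m < p, and let γ be a partition of m. Then for all natural numbers a, b with ⌊(w+1)/2⌋ ≤ a < b ≤ w one has π(γ⋆(bp, (w−b)p)) > π(γ⋆(ap, (w−a)p)). In particular, the hook products π(γ⋆(ap, (w−a)p)) for a ranging over ⌊(w+1)/2⌋, …, w are pairwise distinct. -/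
namespace Stmt2Aux

lemma prod_range_id_factorial (n : ℕ) : ∏ j ∈ Finset.range n, (j + 1) = n.factorial := by
  induction n with
  | zero => simp
  | succ n ih => rw [Finset.prod_range_succ, ih, Nat.factorial_succ, Nat.mul_comm]

lemma prod_range_sub_factorial (n : ℕ) : ∏ j ∈ Finset.range n, (n - j) = n.factorial := by
  rw [← prod_range_id_factorial n, ← Finset.prod_range_reflect (fun j => j + 1) n]
  refine Finset.prod_congr rfl fun j hj => ?_
  simp only [Finset.mem_range] at hj
  omega

lemma factorial_add (x p : ℕ) :
    (x + p).factorial = x.factorial * ∏ t ∈ Finset.range p, (x + t + 1) := by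
  induction p with
  | zero => simp
  | succ p ih =>
    rw [Finset.prod_range_succ, ← Nat.add_assoc, Nat.factorial_succ, ih]
    ring

lemma length_le_sum (T : List ℕ) (h : ∀ t ∈ T, 1 ≤ t) : T.length ≤ T.sum := by
  induction T with
  | nil => simp
  | cons a T ih =>
    simp only [List.length_cons, List.sum_cons]
    have h1 := h a (by simp)
    have h2 := ih (fun t ht => h t (by simp [ht]))
    omega

lemma getD_add_length_le_sum (T : List ℕ) (h : ∀ t ∈ T, 1 ≤ t) :
    ∀ i < T.length, T.getD i 0 + (T.length - 1) ≤ T.sum := by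
  induction T with
  | nil => simp
  | cons a T ih =>
    intro i hi
    have h1 := h a (by simp)
    have h2 := length_le_sum T (fun t ht => h t (by simp [ht]))
    cases i with
    | zero => simp only [List.getD_cons_zero, List.length_cons, List.sum_cons]; omega
    | succ i =>
      simp only [List.length_cons, Nat.add_lt_add_iff_right] at hi
      have := ih (fun t ht => h t (by simp [ht])) i hi
      simp only [List.getD_cons_succ, List.length_cons, List.sum_cons]
      omega

/-- The closed form for the hook product of `γ ⋆ (x,y)`. -/
lemma hookProd_star (g1 : ℕ) (T : List ℕ) (hg1 : 1 ≤ g1)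
    (hT : ∀ t ∈ T, 1 ≤ t ∧ t ≤ g1) (x y : ℕ) :
    hookProd (starPartition (g1 :: T) x y) =
      (x + y + hook (g1 :: T) 0 0)
      * (∏ j ∈ Finset.range (g1 - 1), (x + hook (g1 :: T) 0 (j + 1)))
      * x.factorial
      * (∏ i ∈ Finset.range T.length, (y + hook (g1 :: T) (i + 1) 0))
      * (∏ i ∈ Finset.range T.length,
          ∏ j ∈ Finset.range ((g1 :: T).getD (i + 1) 0 - 1), hook (g1 :: T) (i + 1) (j + 1))
      * y.factorial := by
  have hL : starPartition (g1 :: T) x y = (g1 + x) :: (T ++ List.replicate y 1) := rfl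
  set L := (g1 + x) :: (T ++ List.replicate y 1) with hLdef
  rw [hL]
  -- countP facts
  have hcountL : ∀ j : ℕ, L.countP (fun a => decide (j + 1 ≤ a)) =
      T.countP (fun a => decide (j + 1 ≤ a))
        + (if j = 0 then y else 0) + (if j + 1 ≤ g1 + x then 1 else 0) := by
    intro j
    rw [hLdef, List.countP_cons, List.countP_append, List.countP_replicate]
    simp only [decide_eq_true_eq]
    have h1 : (if j + 1 ≤ (1:ℕ) then y else 0) = (if j = 0 then y else 0) := by
      by_cases hj : j = 0 <;> simp [hj] <;> omega
    rw [h1]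
  have hcountG : ∀ j : ℕ, (g1 :: T).countP (fun a => decide (j + 1 ≤ a)) =
      T.countP (fun a => decide (j + 1 ≤ a)) + (if j + 1 ≤ g1 then 1 else 0) := by
    intro j
    rw [List.countP_cons]
    simp only [decide_eq_true_eq]
  have cT1 : T.countP (fun a => decide (0 + 1 ≤ a)) = T.length := by
    rw [List.countP_eq_length]
    intro t ht
    simp only [decide_eq_true_eq]
    have := (hT t ht).1
    omega
  have cT_zero : ∀ j : ℕ, g1 ≤ j → T.countP (fun a => decide (j + 1 ≤ a)) = 0 := by
    intro j hj
    rw [List.countP_eq_zero]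
    intro t ht
    simp only [decide_eq_true_eq]
    have := (hT t ht).2
    omega
  have cT_le : ∀ j : ℕ, T.countP (fun a => decide (j + 1 ≤ a)) ≤ T.length := by
    intro j; exact List.countP_le_length
  -- getD facts
  have hgetD0 : L.getD 0 0 = g1 + x := rfl
  have hgetD1 : ∀ i, i < T.length → L.getD (i + 1) 0 = T.getD i 0 := by
    intro i hi
    rw [hLdef, List.getD_cons_succ, List.getD_append _ _ _ i hi]
  have hgetD2 : ∀ i, T.length ≤ i → i < T.length + y → L.getD (i + 1) 0 = 1 := by
    intro i h1 h2
    rw [hLdef, List.getD_cons_succ, List.getD_append_right _ _ _ _ h1,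
      List.getD_eq_getElem _ _ (by simp only [List.length_replicate]; omega),
      List.getElem_replicate]
  have hTmem : ∀ i, i < T.length → 1 ≤ T.getD i 0 ∧ T.getD i 0 ≤ g1 := by
    intro i hi
    have : T.getD i 0 ∈ T := by
      rw [List.getD_eq_getElem _ _ hi]
      exact List.getElem_mem hi
    exact hT _ this
  -- pointwise hooks
  have h00 : hook L 0 0 = x + y + hook (g1 :: T) 0 0 := by
    rw [hook, hook, hcountL 0, hcountG 0, cT1, hgetD0]
    simp only [List.getD_cons_zero]
    split_ifs <;> first | contradiction | omega
  have h0j : ∀ j, j < g1 - 1 → hook L 0 (j + 1) = x + hook (g1 :: T) 0 (j + 1) := by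
    intro j hj
    rw [hook, hook, hcountL (j + 1), hcountG (j + 1), hgetD0]
    simp only [List.getD_cons_zero]
    have := cT_le (j + 1)
    split_ifs <;> first | contradiction | omega
  have h0tail : ∀ j, j < x → hook L 0 (g1 + j) = x - j := by
    intro j hj
    rw [hook, hcountL (g1 + j), cT_zero (g1 + j) (by omega), hgetD0]
    split_ifs <;> first | contradiction | omega
  have hi0 : ∀ i, i < T.length → hook L (i + 1) 0 = y + hook (g1 :: T) (i + 1) 0 := by
    intro i hi
    rw [hook, hook, hcountL 0, hcountG 0, cT1, hgetD1 i hi, List.getD_cons_succ]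
    split_ifs <;> first | contradiction | omega
  have hij : ∀ i, i < T.length → ∀ j, j + 1 < T.getD i 0 →
      hook L (i + 1) (j + 1) = hook (g1 :: T) (i + 1) (j + 1) := by
    intro i hi j hj
    have hgi := hTmem i hi
    rw [hook, hook, hcountL (j + 1), hcountG (j + 1), hgetD1 i hi, List.getD_cons_succ]
    split_ifs <;> first | contradiction | omega
  have htrail : ∀ i, i < y → hook L (T.length + i + 1) 0 = y - i := by
    intro i hi
    rw [hook, hcountL 0, cT1, hgetD2 (T.length + i) (by omega) (by omega)]
    split_ifs <;> first | contradiction | omega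
  -- assembly
  have hlen : L.length = (T.length + y) + 1 := by
    simp [hLdef]
  rw [hookProd, hlen, Finset.prod_range_succ']
  have row0 : (∏ j ∈ Finset.range (L.getD 0 0), hook L 0 j)
      = ((x + y + hook (g1 :: T) 0 0)
          * ∏ j ∈ Finset.range (g1 - 1), (x + hook (g1 :: T) 0 (j + 1))) * x.factorial := by
    rw [hgetD0, Finset.prod_range_add]
    congr 1
    · have hg : g1 = (g1 - 1) + 1 := by omega
      conv_lhs => rw [hg]
      rw [Finset.prod_range_succ', h00, mul_comm]
      congr 1
      refine Finset.prod_congr rfl fun j hj => ?_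
      exact h0j j (Finset.mem_range.mp hj)
    · rw [← prod_range_sub_factorial x]
      refine Finset.prod_congr rfl fun j hj => ?_
      exact h0tail j (Finset.mem_range.mp hj)
  have rows : (∏ i ∈ Finset.range (T.length + y),
        ∏ j ∈ Finset.range (L.getD (i + 1) 0), hook L (i + 1) j)
      = ((∏ i ∈ Finset.range T.length, (y + hook (g1 :: T) (i + 1) 0))
          * ∏ i ∈ Finset.range T.length,
              ∏ j ∈ Finset.range ((g1 :: T).getD (i + 1) 0 - 1), hook (g1 :: T) (i + 1) (j + 1))
        * y.factorial := by
    rw [Finset.prod_range_add]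
    congr 1
    · rw [← Finset.prod_mul_distrib]
      refine Finset.prod_congr rfl fun i hi => ?_
      have hi' : i < T.length := Finset.mem_range.mp hi
      have hgi := hTmem i hi'
      rw [hgetD1 i hi', List.getD_cons_succ]
      have hsplit : T.getD i 0 = (T.getD i 0 - 1) + 1 := by omega
      conv_lhs => rw [hsplit]
      rw [Finset.prod_range_succ', hi0 i hi', mul_comm]
      congr 1
      refine Finset.prod_congr rfl fun j hj => ?_
      have hj' : j < T.getD i 0 - 1 := Finset.mem_range.mp hj
      exact hij i hi' j (by omega)
    · rw [← prod_range_sub_factorial y]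
      refine Finset.prod_congr rfl fun i hi => ?_
      have hi' : i < y := Finset.mem_range.mp hi
      rw [hgetD2 (T.length + i) (by omega) (by omega), Finset.prod_range_one]
      exact htrail i hi'
  rw [row0, rows]
  ring


end Stmt2Aux

namespace Stmt2Main

open Stmt2Aux

lemma hook_pos (L : List ℕ) (i j : ℕ) : 1 ≤ hook L i j := by
  simp [hook]

lemma hook_col0_eq (g1 : ℕ) (T : List ℕ) (hg1 : 1 ≤ g1) (hT : ∀ t ∈ T, 1 ≤ t ∧ t ≤ g1)
    (i : ℕ) (hi : i < T.length) :
    hook (g1 :: T) (i + 1) 0 = T.getD i 0 + (T.length - (i + 1)) := by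
  rw [hook]
  have hc : (g1 :: T).countP (fun a => decide (0 + 1 ≤ a)) = (g1 :: T).length := by
    rw [List.countP_eq_length]
    intro t ht
    simp only [decide_eq_true_eq]
    rcases List.mem_cons.mp ht with h | h
    · omega
    · have := (hT t h).1; omega
  simp only [List.length_cons] at hc
  have hmem : T.getD i 0 ∈ T := by
    rw [List.getD_eq_getElem _ _ hi]
    exact List.getElem_mem hi
  have := (hT _ hmem).1
  rw [hc, List.getD_cons_succ]
  omega

/-- The key step: `π(γ⋆(x+p, y')) > π(γ⋆(x, y'+p))` when `x ≥ y'+p`. -/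
lemma step (p g1 : ℕ) (T : List ℕ) (hg1 : 1 ≤ g1) (hT : ∀ t ∈ T, 1 ≤ t ∧ t ≤ g1)
    (hmono : ∀ i i', i ≤ i' → i' < T.length → T.getD i' 0 ≤ T.getD i 0)
    (hdlt : ∀ i, i < T.length → hook (g1 :: T) (i + 1) 0 < p)
    (hlen : T.length < p) (hp : 1 ≤ p)
    (x y' : ℕ) (hxy : y' + p ≤ x) :
    hookProd (starPartition (g1 :: T) x (y' + p)) <
      hookProd (starPartition (g1 :: T) (x + p) y') := by
  rw [hookProd_star g1 T hg1 hT, hookProd_star g1 T hg1 hT]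
  -- basic positivity
  have hd1 : ∀ i : ℕ, 1 ≤ hook (g1 :: T) (i + 1) 0 := fun i => hook_pos _ _ _
  have hdanti : ∀ i i', i < i' → i' < T.length →
      hook (g1 :: T) (i' + 1) 0 < hook (g1 :: T) (i + 1) 0 := by
    intro i i' hii hi'
    rw [hook_col0_eq g1 T hg1 hT i (by omega), hook_col0_eq g1 T hg1 hT i' hi']
    have h1 := hmono i i' (by omega) hi'
    omega
  classical
  set D : Finset ℕ := (Finset.range T.length).image (fun i => hook (g1 :: T) (i + 1) 0 - 1)
    with hD
  have hDsub : D ⊆ Finset.range p := by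
    intro t ht
    rw [hD, Finset.mem_image] at ht
    obtain ⟨i, hi, rfl⟩ := ht
    have := hdlt i (Finset.mem_range.mp hi)
    rw [Finset.mem_range]
    omega
  have hDinj : ∀ i ∈ Finset.range T.length, ∀ i' ∈ Finset.range T.length,
      hook (g1 :: T) (i + 1) 0 - 1 = hook (g1 :: T) (i' + 1) 0 - 1 → i = i' := by
    intro i hi i' hi' hii
    rcases lt_trichotomy i i' with h | h | h
    · have := hdanti i i' h (Finset.mem_range.mp hi')
      have := hd1 i; have := hd1 i'
      omega
    · exact h
    · have := hdanti i' i h (Finset.mem_range.mp hi)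
      have := hd1 i; have := hd1 i'
      omega
  have hDcard : D.card ≤ T.length := by
    calc D.card ≤ (Finset.range T.length).card := Finset.card_image_le
    _ = T.length := Finset.card_range T.length
  have hsd : ∀ z : ℕ, (∏ t ∈ Finset.range p, (z + t + 1))
      = (∏ t ∈ Finset.range p \ D, (z + t + 1))
        * ∏ i ∈ Finset.range T.length, (z + hook (g1 :: T) (i + 1) 0) := by
    intro z
    rw [← Finset.prod_sdiff hDsub]
    congr 1
    rw [Finset.prod_image hDinj]
    refine Finset.prod_congr rfl fun i hi => ?_
    have := hd1 i
    omega
  have hne : (Finset.range p \ D).Nonempty := by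
    rw [← Finset.card_pos, Finset.card_sdiff_of_subset hDsub, Finset.card_range]
    omega
  -- the core inequality
  have key2 : (∏ j ∈ Finset.range (g1 - 1), (x + hook (g1 :: T) 0 (j + 1)))
        * (∏ i ∈ Finset.range T.length, (y' + p + hook (g1 :: T) (i + 1) 0))
        * (∏ t ∈ Finset.range p \ D, (y' + t + 1))
      < (∏ j ∈ Finset.range (g1 - 1), (x + p + hook (g1 :: T) 0 (j + 1)))
        * (∏ i ∈ Finset.range T.length, (x + hook (g1 :: T) (i + 1) 0))
        * (∏ t ∈ Finset.range p \ D, (x + t + 1)) := by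
    apply Nat.mul_lt_mul_of_le_of_lt
    · apply Nat.mul_le_mul
      · exact Finset.prod_le_prod (fun j _ => Nat.zero_le _) (fun j _ => by omega)
      · exact Finset.prod_le_prod (fun i _ => Nat.zero_le _) (fun i _ => by omega)
    · exact Finset.prod_lt_prod_of_nonempty (fun t _ => by omega) (fun t _ => by omega) hne
    · apply Nat.mul_pos
      · exact Finset.prod_pos fun j _ => by have := hook_pos (g1 :: T) 0 (j + 1); omega
      · exact Finset.prod_pos fun i _ => by have := hd1 i; omega
  have hposB : 0 < ∏ i ∈ Finset.range T.length, (y' + hook (g1 :: T) (i + 1) 0) :=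
    Finset.prod_pos fun i _ => by have := hd1 i; omega
  have key : (∏ j ∈ Finset.range (g1 - 1), (x + hook (g1 :: T) 0 (j + 1)))
        * (∏ i ∈ Finset.range T.length, (y' + p + hook (g1 :: T) (i + 1) 0))
        * (∏ t ∈ Finset.range p, (y' + t + 1))
      < (∏ j ∈ Finset.range (g1 - 1), (x + p + hook (g1 :: T) 0 (j + 1)))
        * (∏ t ∈ Finset.range p, (x + t + 1))
        * (∏ i ∈ Finset.range T.length, (y' + hook (g1 :: T) (i + 1) 0)) := by
    rw [hsd y', hsd x]
    calc (∏ j ∈ Finset.range (g1 - 1), (x + hook (g1 :: T) 0 (j + 1)))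
          * (∏ i ∈ Finset.range T.length, (y' + p + hook (g1 :: T) (i + 1) 0))
          * ((∏ t ∈ Finset.range p \ D, (y' + t + 1))
              * ∏ i ∈ Finset.range T.length, (y' + hook (g1 :: T) (i + 1) 0))
        = ((∏ j ∈ Finset.range (g1 - 1), (x + hook (g1 :: T) 0 (j + 1)))
            * (∏ i ∈ Finset.range T.length, (y' + p + hook (g1 :: T) (i + 1) 0))
            * (∏ t ∈ Finset.range p \ D, (y' + t + 1)))
          * ∏ i ∈ Finset.range T.length, (y' + hook (g1 :: T) (i + 1) 0) := by ring
      _ < ((∏ j ∈ Finset.range (g1 - 1), (x + p + hook (g1 :: T) 0 (j + 1)))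
            * (∏ i ∈ Finset.range T.length, (x + hook (g1 :: T) (i + 1) 0))
            * (∏ t ∈ Finset.range p \ D, (x + t + 1)))
          * ∏ i ∈ Finset.range T.length, (y' + hook (g1 :: T) (i + 1) 0) :=
          Nat.mul_lt_mul_of_lt_of_le key2 le_rfl hposB
      _ = (∏ j ∈ Finset.range (g1 - 1), (x + p + hook (g1 :: T) 0 (j + 1)))
            * ((∏ t ∈ Finset.range p \ D, (x + t + 1))
                * ∏ i ∈ Finset.range T.length, (x + hook (g1 :: T) (i + 1) 0))
            * ∏ i ∈ Finset.range T.length, (y' + hook (g1 :: T) (i + 1) 0) := by ring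
  -- now assemble
  have e1 : x + p + y' + hook (g1 :: T) 0 0 = x + (y' + p) + hook (g1 :: T) 0 0 := by ring
  rw [e1, factorial_add x p, factorial_add y' p]
  have hK1 : 1 ≤ hook (g1 :: T) 0 0 := hook_pos _ _ _
  have hI : 0 < ∏ i ∈ Finset.range T.length,
      ∏ j ∈ Finset.range ((g1 :: T).getD (i + 1) 0 - 1), hook (g1 :: T) (i + 1) (j + 1) :=
    Finset.prod_pos fun i _ => Finset.prod_pos fun j _ => hook_pos _ _ _
  have hposA : 0 < (x + (y' + p) + hook (g1 :: T) 0 0) * x.factorial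
      * (∏ i ∈ Finset.range T.length,
          ∏ j ∈ Finset.range ((g1 :: T).getD (i + 1) 0 - 1), hook (g1 :: T) (i + 1) (j + 1))
      * y'.factorial := by
    have := Nat.factorial_pos x
    have := Nat.factorial_pos y'
    positivity
  calc (x + (y' + p) + hook (g1 :: T) 0 0)
        * (∏ j ∈ Finset.range (g1 - 1), (x + hook (g1 :: T) 0 (j + 1))) * x.factorial
        * (∏ i ∈ Finset.range T.length, (y' + p + hook (g1 :: T) (i + 1) 0))
        * (∏ i ∈ Finset.range T.length,
            ∏ j ∈ Finset.range ((g1 :: T).getD (i + 1) 0 - 1), hook (g1 :: T) (i + 1) (j + 1))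
        * (y'.factorial * ∏ t ∈ Finset.range p, (y' + t + 1))
      = ((x + (y' + p) + hook (g1 :: T) 0 0) * x.factorial
          * (∏ i ∈ Finset.range T.length,
              ∏ j ∈ Finset.range ((g1 :: T).getD (i + 1) 0 - 1), hook (g1 :: T) (i + 1) (j + 1))
          * y'.factorial)
        * ((∏ j ∈ Finset.range (g1 - 1), (x + hook (g1 :: T) 0 (j + 1)))
            * (∏ i ∈ Finset.range T.length, (y' + p + hook (g1 :: T) (i + 1) 0))
            * (∏ t ∈ Finset.range p, (y' + t + 1))) := by ring
    _ < ((x + (y' + p) + hook (g1 :: T) 0 0) * x.factorial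
          * (∏ i ∈ Finset.range T.length,
              ∏ j ∈ Finset.range ((g1 :: T).getD (i + 1) 0 - 1), hook (g1 :: T) (i + 1) (j + 1))
          * y'.factorial)
        * ((∏ j ∈ Finset.range (g1 - 1), (x + p + hook (g1 :: T) 0 (j + 1)))
            * (∏ t ∈ Finset.range p, (x + t + 1))
            * (∏ i ∈ Finset.range T.length, (y' + hook (g1 :: T) (i + 1) 0))) :=
        Nat.mul_lt_mul_of_le_of_lt le_rfl key hposA
    _ = (x + (y' + p) + hook (g1 :: T) 0 0)
        * (∏ j ∈ Finset.range (g1 - 1), (x + p + hook (g1 :: T) 0 (j + 1)))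
        * (x.factorial * ∏ t ∈ Finset.range p, (x + t + 1))
        * (∏ i ∈ Finset.range T.length, (y' + hook (g1 :: T) (i + 1) 0))
        * (∏ i ∈ Finset.range T.length,
            ∏ j ∈ Finset.range ((g1 :: T).getD (i + 1) 0 - 1), hook (g1 :: T) (i + 1) (j + 1))
        * y'.factorial := by ring

end Stmt2Main

/-- For a prime `p`, `1 ≤ m < p` and a partition `γ` of `m`, the hook
products `π(γ⋆(ap, (w-a)p))` are strictly increasing in `a` for
`⌊(w+1)/2⌋ ≤ a ≤ w`; in particular they are pairwise distinct. -/
theorem stmt2 (p m w : ℕ) (hp : p.Prime) (hm : 1 ≤ m) (hmp : m < p)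
    (γ : List ℕ) (hsort : γ.Pairwise (· ≥ ·)) (hpos : ∀ c ∈ γ, 0 < c) (hsum : γ.sum = m) :
    (∀ a b : ℕ, (w + 1) / 2 ≤ a → a < b → b ≤ w →
      hookProd (starPartition γ (a * p) ((w - a) * p)) <
        hookProd (starPartition γ (b * p) ((w - b) * p))) ∧
    (∀ a b : ℕ, (w + 1) / 2 ≤ a → a ≤ w → (w + 1) / 2 ≤ b → b ≤ w → a ≠ b →
      hookProd (starPartition γ (a * p) ((w - a) * p)) ≠
        hookProd (starPartition γ (b * p) ((w - b) * p))) := by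
  obtain ⟨g1, T, rfl⟩ : ∃ g1 T, γ = g1 :: T := by
    cases γ with
    | nil => simp at hsum; omega
    | cons a l => exact ⟨a, l, rfl⟩
  have hg1 : 1 ≤ g1 := hpos g1 (by simp)
  have hsc := List.pairwise_cons.mp hsort
  have hT : ∀ t ∈ T, 1 ≤ t ∧ t ≤ g1 := fun t ht => ⟨hpos t (by simp [ht]), hsc.1 t ht⟩
  have hTsorted : T.Pairwise (· ≥ ·) := hsc.2
  have hmono : ∀ i i', i ≤ i' → i' < T.length → T.getD i' 0 ≤ T.getD i 0 := by
    intro i i' h hi'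
    rcases eq_or_lt_of_le h with rfl | h
    · exact le_rfl
    · rw [List.getD_eq_getElem _ _ hi', List.getD_eq_getElem _ _ (by omega)]
      exact hTsorted.rel_get_of_lt (show (⟨i, by omega⟩ : Fin T.length) < ⟨i', hi'⟩ from h)
  have hsum' : g1 + T.sum = m := by simpa using hsum
  have hlenT : T.length ≤ T.sum := Stmt2Aux.length_le_sum T (fun t ht => (hT t ht).1)
  have hlenp : T.length < p := by omega
  have hp1 : 1 ≤ p := hp.two_le.trans' (by omega)
  have hdlt : ∀ i, i < T.length → hook (g1 :: T) (i + 1) 0 < p := by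
    intro i hi
    rw [Stmt2Main.hook_col0_eq g1 T hg1 hT i hi]
    have h1 := Stmt2Aux.getD_add_length_le_sum T (fun t ht => (hT t ht).1) i hi
    omega
  have key : ∀ a, (w + 1) / 2 ≤ a → a < w →
      hookProd (starPartition (g1 :: T) (a * p) ((w - a) * p)) <
        hookProd (starPartition (g1 :: T) ((a + 1) * p) ((w - (a + 1)) * p)) := by
    intro a ha haw
    have e1 : (w - a) * p = (w - (a + 1)) * p + p := by
      have h : w - a = (w - (a + 1)) + 1 := by omega
      rw [h]; ring
    have e2 : (a + 1) * p = a * p + p := by ring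
    rw [e1, e2]
    apply Stmt2Main.step p g1 T hg1 hT hmono hdlt hlenp hp1
    have h : w - (a + 1) + 1 ≤ a := by omega
    calc (w - (a + 1)) * p + p = (w - (a + 1) + 1) * p := by ring
    _ ≤ a * p := Nat.mul_le_mul_right p h
  have mono : ∀ b a, (w + 1) / 2 ≤ a → a < b → b ≤ w →
      hookProd (starPartition (g1 :: T) (a * p) ((w - a) * p)) <
        hookProd (starPartition (g1 :: T) (b * p) ((w - b) * p)) := by
    intro b
    induction b with
    | zero => intro a _ h _; omega
    | succ b ih =>
      intro a ha hab hbw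
      rcases Nat.lt_succ_iff_lt_or_eq.mp hab with h | h
      · exact (ih a ha h (by omega)).trans (key b (by omega) (by omega))
      · subst h
        exact key a ha (by omega)
  refine ⟨fun a b ha hab hbw => mono b a ha hab hbw, fun a b ha haw hb hbw hne => ?_⟩
  rcases lt_trichotomy a b with h | h | h
  · exact (mono b a ha h hbw).ne
  · exact absurd h hne
  · exact (mono a b hb h haw).ne'
end

section
/- Let p be a prime, let u, v be natural numbers with u ≥ v + 1, and let h_2 > h_3 > … > h_ℓ be integers (possibly an empty list) with p > h_2 and h_ℓ ≥ 1. Then ∏_{i=1}^{p} (up + i) · ∏_{j=2}^{ℓ} (h_j + vp) > ∏_{i=1}^{p} (vp + i) · ∏_{j=2}^{ℓ} (h_j + (v+1)p). -/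
/-- Let `p` be a prime, `u ≥ v + 1` natural numbers, and
`h₂ > h₃ > ⋯ > h_ℓ` a (possibly empty) strictly decreasing list of integers with
`p > h₂` and `h_ℓ ≥ 1`. Then
`∏_{i=1}^{p} (up + i) ⬝ ∏_{j=2}^{ℓ} (h_j + vp) > ∏_{i=1}^{p} (vp + i) ⬝ ∏_{j=2}^{ℓ} (h_j + (v+1)p)`. -/
theorem stmt3 (p : ℕ) (hp : p.Prime) (u v : ℕ) (huv : v + 1 ≤ u)
    (H : List ℕ) (hsort : H.Pairwise (· > ·)) (hH : ∀ h ∈ H, 1 ≤ h ∧ h < p) :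
    (∏ i ∈ Finset.Icc 1 p, (u * p + i)) * (H.map (fun h => h + v * p)).prod >
      (∏ i ∈ Finset.Icc 1 p, (v * p + i)) * (H.map (fun h => h + (v + 1) * p)).prod := by
  classical
  have hnd : H.Nodup := hsort.nodup
  set S := H.toFinset with hSdef
  have hmap1 : (H.map (fun h => h + v * p)).prod = ∏ h ∈ S, (h + v * p) :=
    (List.prod_toFinset _ hnd).symm
  have hmap2 : (H.map (fun h => h + (v + 1) * p)).prod = ∏ h ∈ S, (h + (v + 1) * p) :=
    (List.prod_toFinset _ hnd).symm
  have hsub : S ⊆ Finset.Icc 1 p := by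
    intro h hh
    rw [hSdef, List.mem_toFinset] at hh
    exact Finset.mem_Icc.mpr ⟨(hH h hh).1, (hH h hh).2.le⟩
  rw [hmap1, hmap2, ← Finset.prod_sdiff hsub (f := fun i => u * p + i),
    ← Finset.prod_sdiff hsub (f := fun i => v * p + i),
    mul_assoc, mul_assoc, ← Finset.prod_mul_distrib, ← Finset.prod_mul_distrib]
  have hpp : 0 < p := hp.pos
  have hpe : ∀ h ∈ S, (v * p + h) * (h + (v + 1) * p) ≤ (u * p + h) * (h + v * p) := by
    intro h _
    have h1 : (v + 1) * p + h ≤ u * p + h := Nat.add_le_add_right (Nat.mul_le_mul_right _ huv) h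
    calc (v * p + h) * (h + (v + 1) * p) = ((v + 1) * p + h) * (h + v * p) := by ring
      _ ≤ (u * p + h) * (h + v * p) := Nat.mul_le_mul_right _ h1
  have hstrict : ∏ i ∈ Finset.Icc 1 p \ S, (v * p + i) < ∏ i ∈ Finset.Icc 1 p \ S, (u * p + i) := by
    apply Finset.prod_lt_prod_of_nonempty
    · intro i hi
      have : 1 ≤ i := (Finset.mem_Icc.mp (Finset.mem_sdiff.mp hi).1).1
      omega
    · intro i _
      have : v * p < u * p := (Nat.mul_lt_mul_right hpp).mpr (lt_of_lt_of_le (Nat.lt_succ_self v) huv)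
      omega
    · refine ⟨p, Finset.mem_sdiff.mpr ⟨Finset.mem_Icc.mpr ⟨hpp, le_rfl⟩, ?_⟩⟩
      intro hc
      rw [hSdef, List.mem_toFinset] at hc
      exact absurd (hH p hc).2 (lt_irrefl p)
  have hpos : 0 < ∏ h ∈ S, (v * p + h) * (h + v * p) := by
    apply Finset.prod_pos
    intro h hh
    rw [hSdef, List.mem_toFinset] at hh
    have := (hH h hh).1
    positivity
  calc (∏ i ∈ Finset.Icc 1 p \ S, (v * p + i)) * ∏ h ∈ S, (v * p + h) * (h + (v + 1) * p)
      ≤ (∏ i ∈ Finset.Icc 1 p \ S, (v * p + i)) * ∏ h ∈ S, (u * p + h) * (h + v * p) := by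
        exact Nat.mul_le_mul_left _ (Finset.prod_le_prod (fun _ _ => Nat.zero_le _) hpe)
    _ < (∏ i ∈ Finset.Icc 1 p \ S, (u * p + i)) * ∏ h ∈ S, (u * p + h) * (h + v * p) := by
        have hposu : 0 < ∏ h ∈ S, (u * p + h) * (h + v * p) :=
          lt_of_lt_of_le hpos (Finset.prod_le_prod (fun _ _ => Nat.zero_le _)
            (fun h _ => Nat.mul_le_mul_right _ (Nat.add_le_add_right (Nat.mul_le_mul_right _ (le_of_lt (lt_of_lt_of_le (Nat.lt_succ_self v) huv))) h)))
        exact Nat.mul_lt_mul_of_lt_of_le hstrict le_rfl hposu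
end

section
/- Let p be a prime and let n have p-adic expansion n = Σ_{i=0}^{k} a_i p^i with 0 ≤ a_i ≤ p−1 and a_0 ≥ 1. Let γ be a partition of a_0, let x = Σ_{i=1}^{k} b_i p^i with 0 ≤ b_i ≤ a_i for all i ≥ 1, and set y = n − a_0 − x and λ = γ⋆(x, y), a partition of n. Then ν_p(π(λ)) = ν_p(n!); equivalently, by the hook length formula, the irreducible character χ^λ of the symmetric group S_n has degree n!/π(λ) coprime to p. -/
open Finset

private lemma replicate_countP (P : ℕ → Bool) (y : ℕ) :
    (List.replicate y 1).countP P = if P 1 then y else 0 := by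
  induction y with
  | zero => simp
  | succ m ih => rw [List.replicate_succ, List.countP_cons, ih]; split <;> simp

private lemma len_le_sum (l : List ℕ) (h : ∀ c ∈ l, 1 ≤ c) : l.length ≤ l.sum := by
  induction l with
  | nil => simp
  | cons a l ih =>
    simp only [List.length_cons, List.sum_cons]
    have := h a List.mem_cons_self
    have := ih (fun c hc => h c (List.mem_cons_of_mem a hc))
    omega

private lemma not_dvd_helper {p u w : ℕ} (hp : 2 ≤ p) (hu1 : 1 ≤ u) (hup : u ≤ p - 1)
    (hw : p ∣ w) : ¬ p ∣ (u + w) := by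
  intro hd
  have h2 : p ∣ u := by
    have := Nat.dvd_sub hd hw
    simpa using this
  have := Nat.le_of_dvd (by omega) h2
  omega

private lemma vp_prod {p : ℕ} [Fact p.Prime] {ι : Type*} {s : Finset ι} {f : ι → ℕ}
    (hf : ∀ i ∈ s, f i ≠ 0) :
    padicValNat p (∏ i ∈ s, f i) = ∑ i ∈ s, padicValNat p (f i) := by
  classical
  induction s using Finset.cons_induction with
  | empty => simp
  | cons a s ha ih =>
    rw [Finset.prod_cons, Finset.sum_cons,
      padicValNat.mul (hf a (Finset.mem_cons_self a s))
        (Finset.prod_ne_zero_iff.2 fun i hi => hf i (Finset.mem_cons_of_mem hi)),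
      ih fun i hi => hf i (Finset.mem_cons_of_mem hi)]

private lemma vp_factorial_sum (p m : ℕ) [Fact p.Prime] :
    padicValNat p (Nat.factorial m) = ∑ t ∈ Finset.range m, padicValNat p (t + 1) := by
  induction m with
  | zero => simp [Nat.factorial]
  | succ m ih =>
    rw [Finset.sum_range_succ, ← ih, Nat.factorial_succ,
      padicValNat.mul (by omega) (Nat.factorial_ne_zero m)]
    omega

private lemma vp_factorial_reflect (p m : ℕ) [Fact p.Prime] :
    ∑ d ∈ Finset.range m, padicValNat p (m - d) = padicValNat p (Nat.factorial m) := by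
  rw [vp_factorial_sum]
  rw [← Finset.sum_range_reflect (fun t => padicValNat p (t + 1)) m]
  apply Finset.sum_congr rfl
  intro d hd
  rw [Finset.mem_range] at hd
  congr 1
  omega

private lemma geom_bound (p i : ℕ) (hp : 1 ≤ p) :
    ∑ j ∈ Finset.range i, (p - 1) * p ^ j = p ^ i - 1 := by
  induction i with
  | zero => simp
  | succ i ih =>
    rw [Finset.sum_range_succ, ih]
    have h1 : 1 ≤ p ^ i := Nat.one_le_pow _ _ (by omega)
    have key : (p - 1) * p ^ i + p ^ i = p ^ (i + 1) := by
      calc (p - 1) * p ^ i + p ^ i = ((p - 1) + 1) * p ^ i := by ring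
        _ = p * p ^ i := by congr 1; omega
        _ = p ^ (i + 1) := by rw [pow_succ]; ring
    omega

private lemma low_lt {p i : ℕ} (hp : 1 ≤ p) {s : Finset ℕ} (hs : s ⊆ Finset.range i)
    {c : ℕ → ℕ} (hc : ∀ j ∈ s, c j ≤ p - 1) :
    ∑ j ∈ s, c j * p ^ j < p ^ i := by
  have h1 : ∑ j ∈ s, c j * p ^ j ≤ ∑ j ∈ s, (p - 1) * p ^ j :=
    Finset.sum_le_sum fun j hj => Nat.mul_le_mul_right _ (hc j hj)
  have h2 : ∑ j ∈ s, (p - 1) * p ^ j ≤ ∑ j ∈ Finset.range i, (p - 1) * p ^ j :=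
    Finset.sum_le_sum_of_subset hs
  have h3 := geom_bound p i hp
  have h4 : 1 ≤ p ^ i := Nat.one_le_pow _ _ (by omega)
  omega

private lemma digit_div (p k i a0 : ℕ) (hp : 2 ≤ p) (c : ℕ → ℕ)
    (hc : ∀ j, 1 ≤ j → j ≤ k → c j ≤ p - 1) (ha0 : a0 ≤ p - 1) (hi : 1 ≤ i) :
    (a0 + ∑ j ∈ Finset.Icc 1 k, c j * p ^ j) / p ^ i = ∑ j ∈ Finset.Icc i k, c j * p ^ (j - i) := by
  classical
  have hsplit : ∑ j ∈ Finset.Icc 1 k, c j * p ^ j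
      = (∑ j ∈ (Finset.Icc 1 k).filter (· < i), c j * p ^ j)
        + ∑ j ∈ (Finset.Icc 1 k).filter (fun j => ¬ j < i), c j * p ^ j :=
    (Finset.sum_filter_add_sum_filter_not _ _ _).symm
  have hhigh : (Finset.Icc 1 k).filter (fun j => ¬ j < i) = Finset.Icc i k := by
    ext j; simp only [Finset.mem_filter, Finset.mem_Icc, not_lt]; omega
  have hfact : ∑ j ∈ Finset.Icc i k, c j * p ^ j
      = p ^ i * ∑ j ∈ Finset.Icc i k, c j * p ^ (j - i) := by
    rw [Finset.mul_sum]
    apply Finset.sum_congr rfl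
    intro j hj
    rw [Finset.mem_Icc] at hj
    have : p ^ j = p ^ i * p ^ (j - i) := by
      rw [← pow_add]; congr 1; omega
    rw [this]; ring
  have hlow : a0 + ∑ j ∈ (Finset.Icc 1 k).filter (· < i), c j * p ^ j < p ^ i := by
    set s := (Finset.Icc 1 k).filter (· < i) with hs
    have h0 : 0 ∉ s := by simp [hs]
    have hins : a0 + ∑ j ∈ s, c j * p ^ j
        = ∑ j ∈ insert 0 s, (fun j => if j = 0 then a0 else c j) j * p ^ j := by
      rw [Finset.sum_insert h0]
      simp only [if_pos rfl, pow_zero, mul_one]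
      congr 1
      apply Finset.sum_congr rfl
      intro j hj
      have : j ≠ 0 := fun h => h0 (h ▸ hj)
      simp [this]
    rw [hins]
    apply low_lt (by omega)
    · intro j hj
      rcases Finset.mem_insert.mp hj with h | h
      · subst h; simp [Finset.mem_range]; omega
      · simp only [hs, Finset.mem_filter, Finset.mem_Icc] at h
        simp [Finset.mem_range]; omega
    · intro j hj
      rcases Finset.mem_insert.mp hj with h | h
      · simp [h, ha0]
      · have hj0 : j ≠ 0 := fun hh => h0 (hh ▸ h)
        simp only [hs, Finset.mem_filter, Finset.mem_Icc] at h
        simp only [hj0, if_neg]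
        exact hc j h.1.1 h.1.2
  rw [hsplit, hhigh, hfact, ← add_assoc]
  rw [Nat.add_mul_div_left _ _ (Nat.pow_pos (by omega) : 0 < p ^ i)]
  rw [Nat.div_eq_of_lt hlow]
  simp

/-- Let `p` be a prime and `n = Σ_{i=0}^{k} a_i p^i` its `p`-adic expansion
with `a₀ ≥ 1`. Let `γ` be a partition of `a₀`, let `x = Σ_{i=1}^{k} b_i p^i` with
`0 ≤ b_i ≤ a_i` for `i ≥ 1`, and set `y = n - a₀ - x` and `λ = γ⋆(x, y)`.
Then `ν_p(π(λ)) = ν_p(n!)`, i.e. `χ^λ` has degree coprime to `p`. -/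
theorem stmt4 (p k n : ℕ) (hp : p.Prime) (a : ℕ → ℕ)
    (ha : ∀ i, i ≤ k → a i ≤ p - 1) (ha0 : 1 ≤ a 0)
    (hn : n = ∑ i ∈ Finset.range (k + 1), a i * p ^ i)
    (γ : List ℕ) (hsort : γ.Pairwise (· ≥ ·)) (hpos : ∀ c ∈ γ, 0 < c) (hsum : γ.sum = a 0)
    (b : ℕ → ℕ) (hb : ∀ i, 1 ≤ i → i ≤ k → b i ≤ a i)
    (x : ℕ) (hx : x = ∑ i ∈ Finset.Icc 1 k, b i * p ^ i) :
    padicValNat p (hookProd (starPartition γ x (n - a 0 - x))) =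
      padicValNat p (Nat.factorial n) := by
  haveI : Fact p.Prime := ⟨hp⟩
  have hp2 : 2 ≤ p := hp.two_le
  have ha0p : a 0 ≤ p - 1 := ha 0 (by omega)
  have hrange : Finset.range (k + 1) = insert 0 (Finset.Icc 1 k) := by
    ext j; simp only [Finset.mem_range, Finset.mem_insert, Finset.mem_Icc]; omega
  have h0notin : (0 : ℕ) ∉ Finset.Icc 1 k := by simp
  have hn' : n = a 0 + ∑ j ∈ Finset.Icc 1 k, a j * p ^ j := by
    rw [hn, hrange, Finset.sum_insert h0notin]; simp
  have hxy : x + ∑ j ∈ Finset.Icc 1 k, (a j - b j) * p ^ j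
      = ∑ j ∈ Finset.Icc 1 k, a j * p ^ j := by
    rw [hx, ← Finset.sum_add_distrib]
    apply Finset.sum_congr rfl; intro j hj
    rw [Finset.mem_Icc] at hj
    have hbj := hb j hj.1 hj.2
    have heq : b j * p ^ j + (a j - b j) * p ^ j = (b j + (a j - b j)) * p ^ j := by ring
    rw [heq]
    congr 1; omega
  set y := n - a 0 - x with hydef
  have hyeq : y = ∑ j ∈ Finset.Icc 1 k, (a j - b j) * p ^ j := by omega
  have hdvd : ∀ c : ℕ → ℕ, p ∣ ∑ j ∈ Finset.Icc 1 k, c j * p ^ j := by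
    intro c; apply Finset.dvd_sum; intro j hj
    rw [Finset.mem_Icc] at hj
    exact Dvd.dvd.mul_left (dvd_pow_self p (by omega)) _
  have hpx : p ∣ x := hx ▸ hdvd b
  have hpy : p ∣ y := hyeq ▸ hdvd _
  have hpxy : p ∣ x + y := dvd_add hpx hpy
  -- Legendre: ν_p(n!) = ν_p(x!) + ν_p(y!)
  have hnlt : n < p ^ (k + 1) := by
    rw [hn]
    apply low_lt (by omega) (le_refl _)
    intro j hj
    rw [Finset.mem_range] at hj
    exact ha j (by omega)
  have hxn : x ≤ n := by omega
  have hyn : y ≤ n := by omega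
  have hlog : ∀ m, m ≤ n → Nat.log p m < k + 1 := by
    intro m hm
    rcases Nat.eq_zero_or_pos m with h | h
    · subst h; simp [Nat.log_zero_right]
    · exact Nat.log_lt_of_lt_pow (by omega) (lt_of_le_of_lt hm hnlt)
  have hRHS : padicValNat p (Nat.factorial n)
      = padicValNat p (Nat.factorial x) + padicValNat p (Nat.factorial y) := by
    rw [padicValNat_factorial (hlog n le_rfl), padicValNat_factorial (hlog x hxn),
      padicValNat_factorial (hlog y hyn), ← Finset.sum_add_distrib]
    apply Finset.sum_congr rfl
    intro i hi
    rw [Finset.mem_Ico] at hi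
    have h1 := digit_div p k i (a 0) hp2 a (fun j _ hj2 => ha j hj2) ha0p hi.1
    have h2 := digit_div p k i 0 hp2 b (fun j hj1 hj2 => le_trans (hb j hj1 hj2) (ha j hj2)) (by omega) hi.1
    have h3 := digit_div p k i 0 hp2 (fun j => a j - b j)
      (fun j _ hj2 => le_trans (Nat.sub_le _ _) (ha j hj2)) (by omega) hi.1
    rw [hn', h1, hx]
    rw [show ∑ j ∈ Finset.Icc 1 k, b j * p ^ j = 0 + ∑ j ∈ Finset.Icc 1 k, b j * p ^ j from (zero_add _).symm, h2]
    rw [hyeq]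
    rw [show ∑ j ∈ Finset.Icc 1 k, (a j - b j) * p ^ j = 0 + ∑ j ∈ Finset.Icc 1 k, (a j - b j) * p ^ j from (zero_add _).symm, h3]
    rw [← Finset.sum_add_distrib]
    apply Finset.sum_congr rfl
    intro j hj
    rw [Finset.mem_Icc] at hj
    have hbj := hb j (by omega) hj.2
    have heq : b j * p ^ (j - i) + (a j - b j) * p ^ (j - i) = (b j + (a j - b j)) * p ^ (j - i) := by
      ring
    rw [heq]
    congr 1; omega
  -- Now the hook product side
  rcases γ with _ | ⟨g, t⟩
  · simp at hsum; omega
  have hg1 : 1 ≤ g := hpos g List.mem_cons_self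
  have htg : ∀ c ∈ t, c ≤ g := fun c hc => (List.pairwise_cons.mp hsort).1 c hc
  have htpos : ∀ c ∈ t, 1 ≤ c := fun c hc => hpos c (List.mem_cons_of_mem g hc)
  have htlen : t.length ≤ t.sum := len_le_sum t htpos
  have hsum' : g + t.sum = a 0 := by simpa using hsum
  set L := starPartition (g :: t) x y with hLset
  have hLdef : L = (g + x) :: (t ++ List.replicate y 1) := by
    simp [hLset, starPartition]
  have hLlen : L.length = (t.length + 1) + y := by
    rw [hLdef]; simp; omega
  have hcntP : ∀ v : ℕ, L.countP (fun a => decide (v ≤ a)) =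
      (if v ≤ g + x then 1 else 0) + t.countP (fun a => decide (v ≤ a))
        + (if v ≤ 1 then y else 0) := by
    intro v
    rw [hLdef, List.countP_cons, List.countP_append, replicate_countP]
    simp only [decide_eq_true_eq]
    split_ifs <;> omega
  have hcnt1 : L.countP (fun a => decide (1 ≤ a)) = t.length + 1 + y := by
    rw [hcntP 1]
    have ht1 : t.countP (fun a => decide (1 ≤ a)) = t.length := by
      rw [List.countP_eq_length]; intro c hc; simpa using htpos c hc
    rw [ht1, if_pos (show (1:ℕ) ≤ g + x by omega), if_pos (le_refl 1)]
    omega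
  have hget0 : L.getD 0 0 = g + x := by rw [hLdef]; rfl
  have hgett : ∀ s, s < t.length → L.getD (s + 1) 0 = t.getD s 0 := by
    intro s hs
    rw [hLdef, List.getD_cons_succ]
    simp [List.getD_eq_getElem?_getD, List.getElem?_append, hs]
  have hgetrep : ∀ d, d < y → L.getD (t.length + 1 + d) 0 = 1 := by
    intro d hd
    rw [hLdef]
    rw [show t.length + 1 + d = (t.length + d) + 1 by omega, List.getD_cons_succ]
    rw [List.getD_eq_getElem?_getD]
    rw [List.getElem?_append_right (by omega)]
    simp [List.getElem?_replicate, hd]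
  have hFne : ∀ i j, hook L i j ≠ 0 := fun i j => by simp [hook]
  have step1 : padicValNat p (hookProd L)
      = ∑ i ∈ Finset.range L.length, ∑ j ∈ Finset.range (L.getD i 0),
          padicValNat p (hook L i j) := by
    rw [hookProd, vp_prod (fun i _ => Finset.prod_ne_zero_iff.2 fun j _ => hFne i j)]
    exact Finset.sum_congr rfl fun i _ => vp_prod fun j _ => hFne i j
  -- region C : trailing rows of size one
  have hC : ∀ d ∈ Finset.range y,
      (∑ j ∈ Finset.range (L.getD (t.length + 1 + d) 0),
        padicValNat p (hook L (t.length + 1 + d) j)) = padicValNat p (y - d) := by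
    intro d hd
    rw [Finset.mem_range] at hd
    rw [hgetrep d hd, Finset.sum_range_one]
    congr 1
    show (L.getD (t.length + 1 + d) 0 - (0 + 1)) +
      (L.countP (fun a => decide (0 + 1 ≤ a)) - (t.length + 1 + d + 1)) + 1 = y - d
    simp only [Nat.zero_add]
    rw [hgetrep d hd, hcnt1]
    omega
  -- region B : middle rows
  have hB : ∀ s ∈ Finset.range t.length,
      (∑ j ∈ Finset.range (L.getD (s + 1) 0), padicValNat p (hook L (s + 1) j)) = 0 := by
    intro s hs
    rw [Finset.mem_range] at hs
    apply Finset.sum_eq_zero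
    intro j hj
    rw [Finset.mem_range, hgett s hs] at hj
    have hcmem : t.getD s 0 ∈ t := by
      rw [List.getD_eq_getElem t 0 hs]; exact List.getElem_mem hs
    have hcg : t.getD s 0 ≤ g := htg _ hcmem
    have hc1 : 1 ≤ t.getD s 0 := htpos _ hcmem
    apply padicValNat.eq_zero_of_not_dvd
    rcases Nat.eq_zero_or_pos j with rfl | hj1
    · have hhk : hook L (s + 1) 0 = (t.getD s 0 + (t.length - (s + 1))) + y := by
        show (L.getD (s + 1) 0 - (0 + 1)) +
          (L.countP (fun a => decide (0 + 1 ≤ a)) - (s + 1 + 1)) + 1 = _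
        simp only [Nat.zero_add]
        rw [hgett s hs, hcnt1]
        omega
      rw [hhk]
      exact not_dvd_helper hp2 (by omega) (by omega) hpy
    · have hcount := hcntP (j + 1)
      have htc : t.countP (fun a => decide (j + 1 ≤ a)) ≤ t.length := List.countP_le_length
      have hW : L.countP (fun a => decide (j + 1 ≤ a)) ≤ 1 + t.length := by
        rw [hcount]; split_ifs <;> omega
      have hhk : hook L (s + 1) j = (t.getD s 0 - (j + 1)) +
          (L.countP (fun a => decide (j + 1 ≤ a)) - (s + 2)) + 1 := by
        show (L.getD (s + 1) 0 - (j + 1)) + _ + 1 = _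
        rw [hgett s hs]
      intro hdvdc
      have hle : hook L (s + 1) j ≤ p - 1 := by rw [hhk]; omega
      have hpos' : 1 ≤ hook L (s + 1) j := by rw [hhk]; omega
      have := Nat.le_of_dvd (by omega) hdvdc
      omega
  -- region A : first row
  have hA0 : ∀ j ∈ Finset.range g, padicValNat p (hook L 0 j) = 0 := by
    intro j hj
    rw [Finset.mem_range] at hj
    apply padicValNat.eq_zero_of_not_dvd
    rcases Nat.eq_zero_or_pos j with rfl | hj1
    · have hhk : hook L 0 0 = (g + t.length) + (x + y) := by
        show (L.getD 0 0 - (0 + 1)) +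
          (L.countP (fun a => decide (0 + 1 ≤ a)) - (0 + 1)) + 1 = _
        simp only [Nat.zero_add]
        rw [hget0, hcnt1]
        omega
      rw [hhk]
      exact not_dvd_helper hp2 (by omega) (by omega) hpxy
    · have hcv : L.countP (fun a => decide (j + 1 ≤ a))
          = 1 + t.countP (fun a => decide (j + 1 ≤ a)) := by
        rw [hcntP (j + 1), if_pos (show j + 1 ≤ g + x by omega),
          if_neg (show ¬ j + 1 ≤ 1 by omega)]
        omega
      have htc : t.countP (fun a => decide (j + 1 ≤ a)) ≤ t.length := List.countP_le_length
      have hhk : hook L 0 j = ((g - (j + 1)) + t.countP (fun a => decide (j + 1 ≤ a)) + 1) + x := by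
        show (L.getD 0 0 - (j + 1)) + (L.countP (fun a => decide (j + 1 ≤ a)) - (0 + 1)) + 1 = _
        rw [hget0, hcv]
        omega
      rw [hhk]
      exact not_dvd_helper hp2 (by omega) (by omega) hpx
  have hA1 : ∀ d ∈ Finset.range x, padicValNat p (hook L 0 (g + d)) = padicValNat p (x - d) := by
    intro d hd
    rw [Finset.mem_range] at hd
    congr 1
    have htc0 : t.countP (fun a => decide (g + d + 1 ≤ a)) = 0 := by
      rw [List.countP_eq_zero]
      intro c hc
      have := htg c hc
      simp only [decide_eq_true_eq]
      omega
    show (L.getD 0 0 - (g + d + 1)) +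
      (L.countP (fun a => decide (g + d + 1 ≤ a)) - (0 + 1)) + 1 = x - d
    rw [hget0, hcntP (g + d + 1), htc0, if_pos (show g + d + 1 ≤ g + x by omega),
      if_neg (show ¬ g + d + 1 ≤ 1 by omega)]
    omega
  -- assemble
  rw [step1, hLlen, Finset.sum_range_add, Finset.sum_range_succ']
  rw [Finset.sum_eq_zero hB, Finset.sum_congr rfl hC, vp_factorial_reflect]
  rw [hget0, Finset.sum_range_add (fun j => padicValNat p (hook L 0 j)) g x]
  rw [Finset.sum_eq_zero hA0, Finset.sum_congr rfl hA1, vp_factorial_reflect, hRHS]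
  omega
end

section
/- Let p be a prime and let n have p-adic expansion n = Σ_{i=0}^{k} a_i p^i with 0 ≤ a_i ≤ p−1, k ≥ 1, a_k ≠ 0 and a_0 ≥ 1. Let γ = (γ_1 ≥ … ≥ γ_ℓ) be a partition of a_0 and let x = Σ_{i=1}^{k} b_i p^i with 0 ≤ b_i ≤ a_i for all i and b_k ≥ ⌊a_k/2⌋ + 1. Then γ_1 + x > ℓ + (n − a_0 − x); that is, the partition λ = γ⋆(x, n − a_0 − x) has first part strictly larger than its number of parts (equivalently λ_1 > (λ')_1). -/
lemma len_le_sum_s6 (γ : List ℕ) (hpos : ∀ c ∈ γ, 0 < c) : γ.length ≤ γ.sum := by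
  induction γ with
  | nil => simp
  | cons h t ih =>
    simp only [List.length_cons, List.sum_cons]
    have h1 : 1 ≤ h := hpos h (by simp)
    have := ih (fun c hc => hpos c (by simp [hc]))
    omega

lemma icc_bound (p : ℕ) (hp : 2 ≤ p) (a : ℕ → ℕ) :
    ∀ m, (∀ i, 1 ≤ i → i ≤ m → a i ≤ p - 1) →
      (∑ i ∈ Finset.Icc 1 m, a i * p ^ i) + p ≤ p ^ (m + 1) := by
  intro m
  induction m with
  | zero => simp
  | succ m ih =>
    intro h
    rw [Finset.sum_Icc_succ_top (by omega)]
    have h1 := ih (fun i hi him => h i hi (by omega))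
    have h2 : a (m + 1) ≤ p - 1 := h (m+1) (by omega) le_rfl
    have h3 : a (m+1) * p ^ (m+1) ≤ (p-1) * p ^ (m+1) :=
      Nat.mul_le_mul_right _ h2
    have h4 : p ^ (m+2) = p ^ (m+1) + (p-1) * p^(m+1) := by
      have : p ^ (m+2) = p * p ^ (m+1) := by ring
      rw [this]
      have : (p - 1) * p ^ (m+1) = p * p^(m+1) - p^(m+1) := by
        rw [Nat.sub_mul, one_mul]
      rw [this]
      have : p ^ (m+1) ≤ p * p ^ (m+1) := Nat.le_mul_of_pos_left _ (by omega)
      omega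
    have h5 : p ^ (m + 1 + 1) = p ^ (m + 2) := rfl
    omega

/-- With `n = Σ_{i=0}^{k} a_i p^i` the `p`-adic expansion (`k ≥ 1`,
`a_k ≠ 0`, `a₀ ≥ 1`), `γ = (γ₁ ≥ ⋯ ≥ γ_ℓ)` a partition of `a₀`, and
`x = Σ_{i=1}^{k} b_i p^i` with `0 ≤ b_i ≤ a_i` for all `i` and `b_k ≥ ⌊a_k/2⌋ + 1`, one has
`γ₁ + x > ℓ + (n - a₀ - x)`: the partition `λ = γ⋆(x, n - a₀ - x)` has first part strictly
larger than its number of parts. -/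
theorem stmt6 (p k n : ℕ) (hp : p.Prime) (hk : 1 ≤ k) (a : ℕ → ℕ)
    (ha : ∀ i, i ≤ k → a i ≤ p - 1) (hak : a k ≠ 0) (ha0 : 1 ≤ a 0)
    (hn : n = ∑ i ∈ Finset.range (k + 1), a i * p ^ i)
    (γ : List ℕ) (hsort : γ.Pairwise (· ≥ ·)) (hpos : ∀ c ∈ γ, 0 < c)
    (hsum : γ.sum = a 0)
    (b : ℕ → ℕ) (hb : ∀ i, 1 ≤ i → i ≤ k → b i ≤ a i) (hbk : a k / 2 + 1 ≤ b k)
    (x : ℕ) (hx : x = ∑ i ∈ Finset.Icc 1 k, b i * p ^ i) :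
    γ.length + (n - a 0 - x) < γ.headD 0 + x := by
  have hp2 : 2 ≤ p := hp.two_le
  set S := ∑ i ∈ Finset.Icc 1 k, a i * p ^ i with hS
  -- n = a 0 + S
  have hnS : n = a 0 + S := by
    have h1 : Finset.Icc 1 k = Finset.Ico 1 (k + 1) := by
      rw [Finset.Ico_add_one_right_eq_Icc]
    rw [hn, Finset.sum_range_succ', hS, h1, Finset.sum_Ico_eq_sum_range]
    simp only [pow_zero, mul_one, Nat.add_sub_cancel]
    rw [add_comm]
    congr 1
    exact Finset.sum_congr rfl (fun i _ => by rw [add_comm 1 i])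
  -- x ≤ S
  have hxS : x ≤ S := by
    rw [hx, hS]
    exact Finset.sum_le_sum fun i hi => by
      simp only [Finset.mem_Icc] at hi
      exact Nat.mul_le_mul_right _ (hb i hi.1 hi.2)
  -- x ≥ b k * p ^ k
  have hxk : b k * p ^ k ≤ x := by
    rw [hx]
    exact Finset.single_le_sum (f := fun i => b i * p ^ i) (fun i _ => Nat.zero_le _)
      (Finset.mem_Icc.mpr ⟨hk, le_rfl⟩)
  -- S split
  have hSsplit : S = (∑ i ∈ Finset.Icc 1 (k - 1), a i * p ^ i) + a k * p ^ k := by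
    rw [hS]
    obtain ⟨m, rfl⟩ : ∃ m, k = m + 1 := ⟨k - 1, by omega⟩
    rw [Finset.sum_Icc_succ_top (by omega)]
    simp
  have hbound := icc_bound p hp2 a (k - 1) (fun i hi him => ha i (by omega))
  have hpk : p ^ (k - 1 + 1) = p ^ k := by congr 1; omega
  rw [hpk] at hbound
  -- 2 * b k ≥ a k + 1
  have h2bk : a k + 1 ≤ 2 * b k := by omega
  have hSp : S + p ≤ 2 * x := by
    calc S + p ≤ (a k + 1) * p ^ k := by
          rw [hSsplit]
          have : (a k + 1) * p ^ k = a k * p ^ k + p ^ k := by ring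
          omega
      _ ≤ 2 * b k * p ^ k := Nat.mul_le_mul_right _ h2bk
      _ ≤ 2 * x := by rw [mul_assoc]; exact Nat.mul_le_mul_left _ hxk
  have hlen : γ.length ≤ a 0 := hsum ▸ len_le_sum_s6 γ hpos
  have ha0p : a 0 ≤ p - 1 := ha 0 (by omega)
  omega
end

section
/- Let n and r be integers with 2 ≤ r and r + 3 ≤ n. Then n! > π((r, 1^{n−r})) > π((r, 2, 1^{n−r−2})); equivalently, by the hook length formula, the irreducible character degrees of the symmetric group S_n satisfy 1 = χ^{(n)}(1) < χ^{(r,1^{n−r})}(1) < χ^{(r,2,1^{n−r−2})}(1). -/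
lemma countP_rep (j m : ℕ) :
    List.countP (fun a => decide (j + 1 ≤ a)) (List.replicate m 1) = if j = 0 then m else 0 := by
  induction m with
  | zero => simp
  | succ m ih =>
    rw [List.replicate_succ, List.countP_cons, ih]
    by_cases h : j = 0 <;> simp [h]

lemma getD_rep (m i : ℕ) (h : i < m) : (List.replicate m (1:ℕ)).getD i 0 = 1 := by
  induction m generalizing i with
  | zero => omega
  | succ m ih =>
    rw [List.replicate_succ]
    cases i with
    | zero => rfl
    | succ i => simpa using ih i (by omega)

lemma prod_range_sub (n : ℕ) : ∏ i ∈ Finset.range n, (n - i) = Nat.factorial n := by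
  induction n with
  | zero => simp
  | succ n ih =>
    rw [Finset.prod_range_succ']
    simp only [Nat.succ_sub_succ]
    rw [ih, Nat.sub_zero, Nat.factorial_succ, mul_comm]

lemma choose_ge (a b : ℕ) (hb : 0 < b) (hba : b < a) : a ≤ a.choose b := by
  induction a generalizing b with
  | zero => omega
  | succ a ih =>
    rcases Nat.lt_or_ge b a with h | h
    · obtain ⟨c, rfl⟩ : ∃ c, b = c + 1 := ⟨b - 1, by omega⟩
      rw [Nat.choose_succ_succ]
      simp only [Nat.succ_eq_add_one]
      have h1 : 1 ≤ a.choose c := Nat.choose_pos (by omega)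
      have h2 : a ≤ a.choose (c + 1) := by
        rcases Nat.eq_or_lt_of_le (Nat.one_le_iff_ne_zero.mpr (by omega) : 1 ≤ c + 1) with h' | h'
        · rw [← h', Nat.choose_one_right]
        · exact ih (c + 1) (by omega) h
      omega
    · have : b = a := by omega
      subst this
      rw [Nat.choose_succ_self_right]

lemma hp1 (r m : ℕ) (hr : 1 ≤ r) :
    hookProd (r :: List.replicate m 1) = (r + m) * Nat.factorial (r - 1) * Nat.factorial m := by
  set L := r :: List.replicate m 1 with hL
  have hlen : L.length = m + 1 := by simp [hL]
  have hcount : ∀ j : ℕ, j < r →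
      L.countP (fun a => decide (j + 1 ≤ a)) = (if j = 0 then m else 0) + 1 := by
    intro j hj
    rw [hL, List.countP_cons, countP_rep]
    simp [Nat.succ_le_of_lt hj]
  have hrow0 : ∀ j < r, hook L 0 j = if j = 0 then r + m else r - j := by
    intro j hj
    unfold hook
    rw [hcount j hj]
    have : L.getD 0 0 = r := by rw [hL]; rfl
    rw [this]
    by_cases h : j = 0 <;> simp [h] <;> omega
  have hrowi : ∀ i < m, (∏ j ∈ Finset.range (L.getD (i+1) 0), hook L (i+1) j) = m - i := by
    intro i hi
    have hg : L.getD (i+1) 0 = 1 := by rw [hL]; simpa using getD_rep m i hi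
    rw [hg, Finset.prod_range_one]
    unfold hook
    rw [hg, hcount 0 (by omega)]
    simp
    omega
  unfold hookProd
  rw [hlen, Finset.prod_range_succ']
  have e1 : (∏ i ∈ Finset.range m, ∏ j ∈ Finset.range (L.getD (i+1) 0), hook L (i+1) j)
      = Nat.factorial m := by
    rw [Finset.prod_congr rfl (fun i hi => hrowi i (Finset.mem_range.mp hi))]
    exact prod_range_sub m
  have hg0 : L.getD 0 0 = r := by rw [hL]; rfl
  have e2 : (∏ j ∈ Finset.range (L.getD 0 0), hook L 0 j)
      = (r + m) * Nat.factorial (r - 1) := by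
    rw [hg0, Finset.prod_congr rfl (fun j hj => hrow0 j (Finset.mem_range.mp hj))]
    obtain ⟨s, rfl⟩ : ∃ s, r = s + 1 := ⟨r - 1, by omega⟩
    rw [Finset.prod_range_succ']
    simp only [Nat.add_sub_cancel]
    have key : ∀ i ∈ Finset.range s,
        (if i + 1 = 0 then s + 1 + m else s + 1 - (i+1)) = s - i := by
      intro i _; simp [Nat.succ_sub_succ]
    rw [Finset.prod_congr rfl key, prod_range_sub]
    simp [mul_comm]
  rw [e1, e2]
  ring

lemma hp2 (r k : ℕ) (hr : 2 ≤ r) :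
    hookProd (r :: 2 :: List.replicate k 1) =
      (r + k + 1) * r * Nat.factorial (r - 2) * ((k + 2) * Nat.factorial k) := by
  set L := r :: 2 :: List.replicate k 1 with hL
  have hlen : L.length = k + 2 := by simp [hL]
  have hcount : ∀ j : ℕ, j < r →
      L.countP (fun a => decide (j + 1 ≤ a)) =
        1 + (if j ≤ 1 then 1 else 0) + (if j = 0 then k else 0) := by
    intro j hj
    rw [hL, List.countP_cons, List.countP_cons, countP_rep]
    have h1 : decide (j + 1 ≤ r) = true := by simp; omega
    by_cases h : j = 0
    · simp [h, show (1:ℕ) ≤ r by omega]; omega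
    · by_cases h' : j ≤ 1 <;> simp [h, h', h1, hj]
  have hg0 : L.getD 0 0 = r := by rw [hL]; rfl
  have hg1 : L.getD 1 0 = 2 := by rw [hL]; rfl
  have hgi : ∀ i < k, L.getD (i + 2) 0 = 1 := by
    intro i hi
    rw [hL]
    simpa using getD_rep k i hi
  have hrow0 : ∀ j < r, hook L 0 j =
      if j = 0 then r + k + 1 else if j = 1 then r else r - j := by
    intro j hj
    unfold hook
    rw [hcount j hj, hg0]
    by_cases h : j = 0
    · simp [h]; omega
    · by_cases h' : j = 1
      · simp [h, h']; omega
      · have : ¬ j ≤ 1 := by omega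
        simp [h, h', this]; omega
  have hrow1 : (∏ j ∈ Finset.range (L.getD 1 0), hook L 1 j) = k + 2 := by
    rw [hg1]
    have a0 : hook L 1 0 = k + 2 := by
      unfold hook; rw [hcount 0 (by omega), hg1]; simp; omega
    have a1 : hook L 1 1 = 1 := by
      unfold hook; rw [hcount 1 (by omega), hg1]; simp
    rw [Finset.prod_range_succ, Finset.prod_range_one, a0, a1, mul_one]
  have hrowi : ∀ i < k, (∏ j ∈ Finset.range (L.getD (i+2) 0), hook L (i+2) j) = k - i := by
    intro i hi
    rw [hgi i hi, Finset.prod_range_one]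
    unfold hook
    rw [hgi i hi, hcount 0 (by omega)]
    simp
    omega
  unfold hookProd
  rw [hlen, Finset.prod_range_succ', Finset.prod_range_succ']
  have e1 : (∏ i ∈ Finset.range k, ∏ j ∈ Finset.range (L.getD (i+1+1) 0), hook L (i+1+1) j)
      = Nat.factorial k := by
    have key : ∀ i ∈ Finset.range k,
        (∏ j ∈ Finset.range (L.getD (i+1+1) 0), hook L (i+1+1) j) = k - i := by
      intro i hi; exact hrowi i (Finset.mem_range.mp hi)
    rw [Finset.prod_congr rfl key, prod_range_sub]
  have e2 : (∏ j ∈ Finset.range (L.getD 0 0), hook L 0 j)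
      = (r + k + 1) * r * Nat.factorial (r - 2) := by
    rw [hg0, Finset.prod_congr rfl (fun j hj => hrow0 j (Finset.mem_range.mp hj))]
    obtain ⟨s, rfl⟩ : ∃ s, r = s + 2 := ⟨r - 2, by omega⟩
    rw [Finset.prod_range_succ', Finset.prod_range_succ']
    have key : ∀ i ∈ Finset.range s,
        (if i + 1 + 1 = 0 then s + 2 + k + 1 else if i + 1 + 1 = 1 then s + 2 else s + 2 - (i+1+1))
          = s - i := by
      intro i _; simp
    rw [Finset.prod_congr rfl key, prod_range_sub]
    norm_num
    ring
  rw [e1, hrow1, e2]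
  ring

/-- For integers `2 ≤ r` and `r + 3 ≤ n`, one has
`n! > π((r, 1^{n-r})) > π((r, 2, 1^{n-r-2}))`; equivalently, by the hook length formula,
`1 = χ^{(n)}(1) < χ^{(r,1^{n-r})}(1) < χ^{(r,2,1^{n-r-2})}(1)`. -/
theorem stmt8 (n r : ℕ) (hr : 2 ≤ r) (hn : r + 3 ≤ n) :
    hookProd (r :: List.replicate (n - r) 1) < Nat.factorial n ∧
    hookProd (r :: 2 :: List.replicate (n - r - 2) 1) <
      hookProd (r :: List.replicate (n - r) 1) ∧
    1 < Nat.factorial n / hookProd (r :: List.replicate (n - r) 1) ∧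
    Nat.factorial n / hookProd (r :: List.replicate (n - r) 1) <
      Nat.factorial n / hookProd (r :: 2 :: List.replicate (n - r - 2) 1) := by
  obtain ⟨s, rfl⟩ : ∃ s, r = s + 2 := ⟨r - 2, by omega⟩
  obtain ⟨k, rfl⟩ : ∃ k, n = s + k + 5 := ⟨n - s - 5, by omega⟩
  have e1 : s + k + 5 - (s + 2) = k + 3 := by omega
  have e2 : k + 3 - 2 = k + 1 := by omega
  rw [e1, e2, hp1 (s+2) (k+3) (by omega), hp2 (s+2) (k+1) (by omega)]
  have f1 : s + 2 - 1 = s + 1 := rfl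
  have f2 : s + 2 - 2 = s := rfl
  rw [f1, f2]
  set F := Nat.factorial s with hF
  set G := Nat.factorial (k+1) with hG
  have hFpos : 0 < F := Nat.factorial_pos s
  have hGpos : 0 < G := Nat.factorial_pos (k+1)
  -- expanded forms
  have hfs1 : Nat.factorial (s+1) = (s+1) * F := by rw [Nat.factorial_succ]
  have hfk3 : Nat.factorial (k+3) = (k+3) * ((k+2) * G) := by
    rw [Nat.factorial_succ, Nat.factorial_succ]
  set D := F * ((k+3) * G) with hD
  have hDpos : 0 < D := by positivity
  set a1 := (s+k+5) * ((s+1)*(k+2)) with ha1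
  set a2 := (s+k+4) * (s+2) with ha2
  have hπ1 : (s + 2 + (k+3)) * Nat.factorial (s+1) * Nat.factorial (k+3) = a1 * D := by
    rw [hfs1, hfk3, ha1, hD]
    ring_nf
  have hπ2 : (s+2+(k+1)+1) * (s+2) * F * ((k+1+2) * G) = a2 * D := by
    rw [ha2, hD]
    ring_nf
  rw [hπ1, hπ2]
  -- the factorial of n
  set C := (s+k+4).choose (s+1) with hC
  have hCfac : C * Nat.factorial (s+1) * Nat.factorial (k+3) = Nat.factorial (s+k+4) := by
    have h := Nat.choose_mul_factorial_mul_factorial (show s+1 ≤ s+k+4 by omega)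
    have : s + k + 4 - (s+1) = k + 3 := by omega
    rwa [this] at h
  have hN : Nat.factorial (s+k+5) = C * (a1 * D) := by
    have : s + k + 5 = (s+k+4) + 1 := by omega
    rw [this, Nat.factorial_succ, ← hCfac, ← hπ1]
    ring_nf
  have hCge : s + k + 4 ≤ C := choose_ge (s+k+4) (s+1) (by omega) (by omega)
  have hA1pos : 0 < a1 * D := by positivity
  have ha12 : a2 + (s + 2) ≤ a1 := by
    rw [ha1, ha2]
    have h0 : s + 2 ≤ (s+1)*(k+2) := by nlinarith [Nat.zero_le (s*k)]
    calc (s+k+4)*(s+2) + (s+2) = (s+k+5)*(s+2) := by ring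
    _ ≤ (s+k+5)*((s+1)*(k+2)) := Nat.mul_le_mul_left _ h0
  refine ⟨?_, ?_, ?_, ?_⟩
  · rw [hN]
    calc a1 * D = 1 * (a1 * D) := by ring
    _ < C * (a1 * D) := (Nat.mul_lt_mul_right hA1pos).mpr (by omega)
  · exact (Nat.mul_lt_mul_right hDpos).mpr (by omega)
  · rw [hN, mul_comm C, Nat.mul_div_cancel_left _ hA1pos]
    omega
  · rw [hN, mul_comm C, Nat.mul_div_cancel_left _ hA1pos]
    have hkey : (C + 1) * (a2 * D) ≤ a1 * D * C := by
      have h1 : (C+1) * a2 ≤ C * a1 := by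
        calc (C+1) * a2 = C * a2 + a2 := by ring
        _ ≤ C * a2 + C * (s+2) := by
            have : a2 ≤ C * (s+2) := by
              rw [ha2]; exact Nat.mul_le_mul_right _ hCge
            omega
        _ = C * (a2 + (s+2)) := by ring
        _ ≤ C * a1 := Nat.mul_le_mul_left _ ha12
      calc (C+1) * (a2 * D) = ((C+1) * a2) * D := by ring
      _ ≤ (C * a1) * D := Nat.mul_le_mul_right _ h1
      _ = a1 * D * C := by ring
    have hpos2 : 0 < a2 * D := by positivity
    have := (Nat.le_div_iff_mul_le hpos2).mpr hkey
    omega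
end

section
/- Let G be a finite group, p a prime, and S_1, …, S_t nontrivial subgroups of G such that: (i) S_i ∩ S_j = 1 for all i ≠ j; (ii) every S_i normalizes every S_j (so that each S_i is contained in M := ⋂_{j=1}^{t} N_G(S_j) and is normal in M); (iii) for every g ∈ G and every i there exists j with g S_i g^{−1} = S_j; and (iv) p divides |S_i| for every i. Let Q be a Sylow p-subgroup of M. Then the centralizer C_G(Q) is contained in M. -/
/-- The intersection `M = ⋂_j N_G(S_j)` of the normalizers of a family of subgroups. -/
def interNormalizer {G : Type*} [Group G] {t : ℕ} (S : Fin t → Subgroup G) : Subgroup G :=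
  ⨅ j, Subgroup.normalizer (S j : Set G)

open Pointwise in
/-- In a finite group `M`, if `N` is a normal subgroup with `p ∣ |N|` and `Q` is a Sylow
`p`-subgroup of `M`, then `Q ∩ N` contains a nontrivial element. -/
lemma aux_exists_mem_sylow_inter {M : Type*} [Group M] [Finite M] {p : ℕ} (hp : p.Prime)
    (N : Subgroup M) (hN : N.Normal) (hdvd : p ∣ Nat.card N) (Q : Sylow p M) :
    ∃ x : M, x ∈ (Q : Subgroup M) ∧ x ∈ N ∧ x ≠ 1 := by
  haveI : Fact p.Prime := ⟨hp⟩
  obtain ⟨y, hy⟩ := exists_prime_orderOf_dvd_card' (G := N) p hdvd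
  have hyo : orderOf (y : M) = p := (Subgroup.orderOf_coe y).trans hy
  have hpgrp : IsPGroup p (Subgroup.zpowers (y : M)) :=
    IsPGroup.of_card (((Nat.card_zpowers (y : M)).trans hyo).trans (pow_one p).symm)
  obtain ⟨R, hR⟩ := hpgrp.exists_le_sylow
  obtain ⟨g, hg⟩ := MulAction.exists_smul_eq M R Q
  refine ⟨g * ↑y * g⁻¹, ?_, hN.conj_mem _ y.2 g, ?_⟩
  · have hyR : (y : M) ∈ (R : Subgroup M) := hR (Subgroup.mem_zpowers _)
    have : (MulAut.conj g) (y : M) ∈ MulAut.conj g • (R : Subgroup M) :=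
      Subgroup.smul_mem_pointwise_smul _ _ _ hyR
    rw [← Sylow.coe_subgroup_smul, hg] at this
    simpa [MulAut.conj_apply] using this
  · intro h
    have h1 : (y : M) = 1 := by
      have := congrArg (fun z => g⁻¹ * z * g) h
      simpa [mul_assoc] using this
    have : orderOf (y : M) = 1 := by rw [h1, orderOf_one]
    rw [hyo] at this
    exact hp.one_lt.ne' this

/-- Let `G` be a finite group, `p` a prime, and `S₁, …, S_t` nontrivial
subgroups of `G` that pairwise intersect trivially, normalize each other, are permuted by
conjugation by `G`, and have order divisible by `p`. If `Q` is a Sylow `p`-subgroup of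
`M = ⋂_j N_G(S_j)`, then `C_G(Q) ≤ M`. -/
theorem stmt9 {G : Type*} [Group G] [Finite G] (p : ℕ) (hp : p.Prime)
    (t : ℕ) (ht : 0 < t) (S : Fin t → Subgroup G)
    (hnontriv : ∀ i, S i ≠ ⊥)
    (hdisj : ∀ i j, i ≠ j → S i ⊓ S j = ⊥)
    (hnorm : ∀ i j, S i ≤ Subgroup.normalizer (S j : Set G))
    (hperm : ∀ (g : G) (i : Fin t), ∃ j,
      Subgroup.map (MulAut.conj g).toMonoidHom (S i) = S j)
    (hdvd : ∀ i, p ∣ Nat.card (S i))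
    (Q : Sylow p (interNormalizer S)) :
    Subgroup.centralizer
        (((Q : Subgroup (interNormalizer S)).map (interNormalizer S).subtype : Subgroup G) : Set G)
      ≤ interNormalizer S := by
  have hSM : ∀ i, S i ≤ interNormalizer S := fun i => le_iInf fun j => hnorm i j
  have hMnorm : ∀ i, interNormalizer S ≤ Subgroup.normalizer (S i : Set G) := fun i => iInf_le _ i
  intro c hc
  rw [Subgroup.mem_centralizer_iff] at hc
  -- It suffices to show that `c` normalizes each `S i`.
  refine Subgroup.mem_iInf.mpr fun i => ?_
  -- The subgroup `S i` viewed inside `M` is normal in `M`.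
  have hNnormal : ((S i).subgroupOf (interNormalizer S)).Normal := by
    constructor
    intro n hn g
    have hg : (g : G) ∈ Subgroup.normalizer (S i : Set G) := hMnorm i g.2
    rw [Subgroup.mem_subgroupOf] at hn ⊢
    rw [Subgroup.mem_normalizer_iff] at hg
    exact (hg n).mp hn
  have hcard : p ∣ Nat.card ((S i).subgroupOf (interNormalizer S)) := by
    have := Nat.card_congr (Subgroup.subgroupOfEquivOfLe (hSM i)).toEquiv
    rw [this]; exact hdvd i
  obtain ⟨x, hxQ, hxN, hx1⟩ :=
    aux_exists_mem_sylow_inter hp ((S i).subgroupOf (interNormalizer S)) hNnormal hcard Q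
  rw [Subgroup.mem_subgroupOf] at hxN
  -- `c` commutes with `↑x`.
  have hcx : c * (x : G) = (x : G) * c := by
    have hmem : (x : G) ∈ (Q : Subgroup (interNormalizer S)).map (interNormalizer S).subtype :=
      Subgroup.mem_map_of_mem _ hxQ
    exact (hc (x : G) hmem).symm
  obtain ⟨j, hj⟩ := hperm c i
  -- In fact `j = i`, since `↑x ∈ S i ∩ S j`.
  have hji : j = i := by
    by_contra hne
    have hxSj : (x : G) ∈ S j := by
      rw [← hj]
      refine ⟨x, hxN, ?_⟩
      simp only [MulEquiv.coe_toMonoidHom, MulAut.conj_apply]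
      rw [hcx]; group
    have hxij : (x : G) ∈ S i ⊓ S j := ⟨hxN, hxSj⟩
    rw [hdisj i j (Ne.symm hne)] at hxij
    exact hx1 (Subtype.ext (by simpa using hxij))
  -- Conjugation by `c` maps `S i` onto itself, so `c` normalizes `S i`.
  rw [hji] at hj
  rw [Subgroup.mem_normalizer_iff]
  intro h
  constructor
  · intro hh
    rw [← hj]
    exact ⟨h, hh, rfl⟩
  · intro hh
    rw [← hj] at hh
    obtain ⟨h', hh', heq⟩ := hh
    simp only [MulEquiv.coe_toMonoidHom, MulAut.conj_apply] at heq
    have hh'' : h' = h := by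
      have := congrArg (fun z => c⁻¹ * z * c) heq
      simpa [mul_assoc] using this
    rwa [← hh'']
end
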